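/- arXiv:2311.08332 — 6 statements merged into one kernel-verified Lean document; each statement's English description precedes it below -/
import Mathlib

section
/- Let G = (V,E) be a finite graph and r* the rank function of the bond (cographic) matroid of G. Then the collection 𝒞 = {A ⊆ V : A is nonempty, r*(δ(A)) ≤ |A|, and no proper nonempty subset A' ⊊ A satisfies r*(δ(A')) ≤ |A'|} satisfies the circuit axioms of a matroid on ground set V. -/
/-- A finite undirected multigraph on vertex type `V` with edge type `E`:
each edge has an unordered pair of endpoints (possibly a loop). -/
structure Multigraph (V E : Type*) where
  ends : E → Sym2 V

namespace Multigraph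

variable {V E : Type*} (G : Multigraph V E)

/-- `δ(A)`: the set of edges incident to at least one vertex of `A`. -/
def inc (A : Set V) : Set E := {e | ∃ v ∈ A, v ∈ G.ends e}

/-- Number of connected components of the spanning subgraph of `G`
with edge set `B` (on the full vertex set `V`). -/
noncomputable def numComponentsEdges (B : Set E) : ℕ :=
  Nat.card (Quot (fun u v : V => ∃ e ∈ B, G.ends e = s(u, v)))

/-- Number of connected components `ω(S)` of the subgraph of `G` induced on `S`. -/
noncomputable def numComponentsSub (S : Set V) : ℕ :=
  Nat.card (Quot (fun x y : S => ∃ e, G.ends e = s(x.1, y.1)))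

/-- Rank function of the cycle (graphic) matroid of `G`:
`r(B) = |V| - (number of components of (V, B))`. -/
noncomputable def cycleRank (B : Set E) : ℕ :=
  Nat.card V - G.numComponentsEdges B

/-- Rank function `r*` of the bond (cographic) matroid of `G`:
`r*(B) = |B| + r(E - B) - r(E)`. -/
noncomputable def bondRank (B : Set E) : ℕ :=
  B.ncard + G.cycleRank Bᶜ - G.cycleRank Set.univ

/-- `G` is connected. -/
def Connected : Prop := G.numComponentsEdges Set.univ = 1

/-- `G` is 2-edge-connected: it is connected and deleting any single edge
leaves it connected. -/
def TwoEdgeConnected : Prop :=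
  G.Connected ∧ ∀ e : E, G.numComponentsEdges {e}ᶜ = 1

/-- `G` is 2-vertex-connected: it is connected and deleting any single vertex
leaves it connected. -/
def TwoVertexConnected : Prop :=
  G.Connected ∧ ∀ v : V, G.numComponentsSub {v}ᶜ = 1

/-- `G` has no loops. -/
def Loopless : Prop := ∀ e : E, ¬ (G.ends e).IsDiag

open Classical in
/-- The degree of a vertex, with loops counting twice. -/
noncomputable def degree [Fintype E] (v : V) : ℕ :=
  ∑ e : E, (if G.ends e = s(v, v) then 2 else if v ∈ G.ends e then 1 else 0)

/-- `G` is trivalent: every vertex has degree `3`. -/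
def Trivalent [Fintype E] : Prop := ∀ v : V, G.degree v = 3

/-- `A ⊆ V` is the vertex set of a cycle `v₁, …, vₙ, v₁` of `G`: there are
pairwise distinct vertices `f 0, …, f (n-1)` with range `A` and pairwise
distinct edges joining cyclically consecutive vertices. -/
def IsCycleSet (A : Set V) : Prop :=
  ∃ n : ℕ, 0 < n ∧ ∃ f : ZMod n → V, Function.Injective f ∧ Set.range f = A ∧
    ∃ e : ZMod n → E, Function.Injective e ∧ ∀ i, G.ends (e i) = s(f i, f (i + 1))

/-- The subgraph induced on `A` contains a cycle. -/
def Cyclic (A : Set V) : Prop := ∃ C ⊆ A, G.IsCycleSet C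

/-- The subgraph induced on `A` is acyclic (a forest). -/
def Acyclic (A : Set V) : Prop := ¬ G.Cyclic A

/-- `A` is a circuit of the graph curve matroid `M_G`: `A` is nonempty,
`r*(δ(A)) ≤ |A|`, and no proper nonempty subset `A'` satisfies `r*(δ(A')) ≤ |A'|`. -/
noncomputable def IsCircuitMG (A : Set V) : Prop :=
  A.Nonempty ∧ G.bondRank (G.inc A) ≤ A.ncard ∧
    ∀ A' : Set V, A' ⊂ A → A'.Nonempty → A'.ncard < G.bondRank (G.inc A')

/-- `A` is dependent in the graph curve matroid `M_G`, i.e. contains a circuit. -/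
noncomputable def DepMG (A : Set V) : Prop := ∃ C ⊆ A, G.IsCircuitMG C

/-- `A` is independent in the graph curve matroid `M_G`. -/
noncomputable def IndepMG (A : Set V) : Prop := ¬ G.DepMG A

/-- The rank function of the graph curve matroid `M_G`:
the maximal cardinality of an independent subset. -/
noncomputable def rankMG (A : Set V) : ℕ :=
  sSup {n | ∃ I ⊆ A, G.IndepMG I ∧ I.ncard = n}

/-- `B` is a basis of the graph curve matroid `M_G`:
a maximal independent set. -/
noncomputable def IsBasisMG (B : Set V) : Prop :=
  G.IndepMG B ∧ ∀ I : Set V, G.IndepMG I → B ⊆ I → I = B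

end Multigraph

set_option linter.unusedSectionVars false

namespace GCM

open Multigraph

section QuotLemmas

variable {α : Type*}

/-- Add one (symmetrized) pair to a relation. -/
def addRel (r : α → α → Prop) (a b : α) : α → α → Prop :=
  fun u v => r u v ∨ (u = a ∧ v = b) ∨ (u = b ∧ v = a)

/-- The canonical map between quotients by comparable relations. -/
def quotMap {r r' : α → α → Prop} (h : ∀ a b, r a b → r' a b) : Quot r → Quot r' :=
  Quot.map id h

lemma quotMap_surjective {r r' : α → α → Prop} (h : ∀ a b, r a b → r' a b) :
    Function.Surjective (quotMap h) := fun q =>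
  Quot.inductionOn q fun x => ⟨Quot.mk _ x, rfl⟩

variable {r : α → α → Prop} {a b : α}

lemma quot_card_le {r r' : α → α → Prop} [Finite α] (h : ∀ a b, r a b → r' a b) :
    Nat.card (Quot r') ≤ Nat.card (Quot r) :=
  Nat.card_le_card_of_surjective (quotMap h) (quotMap_surjective h)

lemma mk_mono {r r' : α → α → Prop} (h : ∀ a b, r a b → r' a b) {x y : α}
    (hxy : Quot.mk r x = Quot.mk r y) : Quot.mk r' x = Quot.mk r' y :=
  congrArg (quotMap h) hxy

lemma addRel_mk_eq_iff (u v : α) :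
    Quot.mk (addRel r a b) u = Quot.mk (addRel r a b) v ↔
      (Quot.mk r u = Quot.mk r v ∨
        (Quot.mk r u = Quot.mk r a ∧ Quot.mk r b = Quot.mk r v) ∨
        (Quot.mk r u = Quot.mk r b ∧ Quot.mk r a = Quot.mk r v)) := by
  constructor
  · intro h
    rw [Quot.eq] at h
    induction h with
    | rel x y hxy =>
      rcases hxy with h | ⟨h1, h2⟩ | ⟨h1, h2⟩
      · exact Or.inl (Quot.sound h)
      · subst h1; subst h2; exact Or.inr (Or.inl ⟨rfl, rfl⟩)
      · subst h1; subst h2; exact Or.inr (Or.inr ⟨rfl, rfl⟩)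
    | refl x => exact Or.inl rfl
    | symm x y _ ih =>
      rcases ih with h | ⟨h1, h2⟩ | ⟨h1, h2⟩
      · exact Or.inl h.symm
      · exact Or.inr (Or.inr ⟨h2.symm, h1.symm⟩)
      · exact Or.inr (Or.inl ⟨h2.symm, h1.symm⟩)
    | trans x y z _ _ ih1 ih2 =>
      rcases ih1 with h | ⟨h1, h2⟩ | ⟨h1, h2⟩ <;>
        rcases ih2 with g | ⟨g1, g2⟩ | ⟨g1, g2⟩
      · exact Or.inl (h.trans g)
      · exact Or.inr (Or.inl ⟨h.trans g1, g2⟩)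
      · exact Or.inr (Or.inr ⟨h.trans g1, g2⟩)
      · exact Or.inr (Or.inl ⟨h1, h2.trans g⟩)
      · exact Or.inl (h1.trans (((h2.trans g1).symm).trans g2))
      · exact Or.inl (h1.trans g2)
      · exact Or.inr (Or.inr ⟨h1, h2.trans g⟩)
      · exact Or.inl (h1.trans g2)
      · exact Or.inl (h1.trans (((h2.trans g1).symm).trans g2))
  · intro h
    have hle : ∀ x y, r x y → addRel r a b x y := fun _ _ hxy => Or.inl hxy
    have hab : Quot.mk (addRel r a b) a = Quot.mk (addRel r a b) b :=
      Quot.sound (Or.inr (Or.inl ⟨rfl, rfl⟩))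
    rcases h with h | ⟨h1, h2⟩ | ⟨h1, h2⟩
    · exact mk_mono hle h
    · exact ((mk_mono hle h1).trans hab).trans (mk_mono hle h2)
    · exact ((mk_mono hle h1).trans hab.symm).trans (mk_mono hle h2)

lemma card_addRel_of_eq (h : Quot.mk r a = Quot.mk r b) :
    Nat.card (Quot (addRel r a b)) = Nat.card (Quot r) := by
  refine (Nat.card_eq_of_bijective
    (quotMap (fun _ _ hxy => Or.inl hxy) : Quot r → Quot (addRel r a b))
    ⟨?_, quotMap_surjective _⟩).symm
  intro q1 q2
  induction q1 using Quot.inductionOn with | _ x =>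
  induction q2 using Quot.inductionOn with | _ y =>
  intro hq
  have hq' : Quot.mk (addRel r a b) x = Quot.mk (addRel r a b) y := hq
  rcases (addRel_mk_eq_iff x y).1 hq' with h' | ⟨h1, h2⟩ | ⟨h1, h2⟩
  · exact h'
  · exact (h1.trans h).trans h2
  · exact (h1.trans h.symm).trans h2

lemma card_addRel_of_ne [Finite α] (h : Quot.mk r a ≠ Quot.mk r b) :
    Nat.card (Quot r) = Nat.card (Quot (addRel r a b)) + 1 := by
  classical
  have e1 : Nat.card (Quot r) = Nat.card {x : Quot r // x ≠ Quot.mk r b} + 1 := by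
    rw [← Finite.card_option]
    exact (Nat.card_congr (Equiv.optionSubtypeNe (Quot.mk r b))).symm
  rw [e1]
  congr 1
  refine (Nat.card_eq_of_bijective
    (fun x : {x : Quot r // x ≠ Quot.mk r b} =>
      (quotMap (fun _ _ hxy => Or.inl hxy) : Quot r → Quot (addRel r a b)) x.1)
    ⟨?_, ?_⟩)
  · rintro ⟨q1, hq1⟩ ⟨q2, hq2⟩ hq
    induction q1 using Quot.inductionOn with | _ x =>
    induction q2 using Quot.inductionOn with | _ y =>
    have hq' : Quot.mk (addRel r a b) x = Quot.mk (addRel r a b) y := hq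
    rcases (addRel_mk_eq_iff x y).1 hq' with h' | ⟨h1, h2⟩ | ⟨h1, h2⟩
    · exact Subtype.ext h'
    · exact absurd h2.symm hq2
    · exact absurd h1 hq1
  · intro q
    induction q using Quot.inductionOn with | _ u =>
    by_cases hu : Quot.mk r u = Quot.mk r b
    · refine ⟨⟨Quot.mk r a, h⟩, ?_⟩
      show Quot.mk (addRel r a b) a = Quot.mk (addRel r a b) u
      have hab2 : Quot.mk (addRel r a b) a = Quot.mk (addRel r a b) b :=
        Quot.sound (Or.inr (Or.inl ⟨rfl, rfl⟩))
      have hbu : Quot.mk (addRel r a b) b = Quot.mk (addRel r a b) u :=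
        mk_mono (fun _ _ hxy => Or.inl hxy) hu.symm
      exact hab2.trans hbu
    · exact ⟨⟨Quot.mk r u, hu⟩, rfl⟩

end QuotLemmas

section Graph

variable {V E : Type*} [Fintype V] [Fintype E] (G : Multigraph V E)

/-- The adjacency relation generated by an edge set. -/
def grel (B : Set E) : V → V → Prop := fun u v => ∃ e ∈ B, G.ends e = s(u, v)

lemma ncE_eq (B : Set E) : G.numComponentsEdges B = Nat.card (Quot (grel G B)) := rfl

lemma ncE_antitone {B B' : Set E} (h : B ⊆ B') :
    G.numComponentsEdges B' ≤ G.numComponentsEdges B :=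
  quot_card_le (fun _ _ ⟨e, he, hev⟩ => ⟨e, h he, hev⟩)

lemma ncE_le_cardV (B : Set E) : G.numComponentsEdges B ≤ Nat.card V :=
  Nat.card_le_card_of_surjective (Quot.mk _) Quot.mk_surjective

lemma grel_insert {e : E} {a b : V} (hab : G.ends e = s(a, b)) (B : Set E) :
    grel G (insert e B) = addRel (grel G B) a b := by
  funext u v
  apply propext
  constructor
  · rintro ⟨f, hf, hfv⟩
    rcases hf with rfl | hf
    · rw [hab, Sym2.eq_iff] at hfv
      rcases hfv with ⟨rfl, rfl⟩ | ⟨rfl, rfl⟩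
      · exact Or.inr (Or.inl ⟨rfl, rfl⟩)
      · exact Or.inr (Or.inr ⟨rfl, rfl⟩)
    · exact Or.inl ⟨f, hf, hfv⟩
  · rintro (⟨f, hf, hfv⟩ | ⟨rfl, rfl⟩ | ⟨rfl, rfl⟩)
    · exact ⟨f, Set.mem_insert_of_mem _ hf, hfv⟩
    · exact ⟨e, Set.mem_insert _ _, hab⟩
    · exact ⟨e, Set.mem_insert _ _, by rw [hab, Sym2.eq_swap]⟩

lemma ncE_insert_le (e : E) (B : Set E) :
    G.numComponentsEdges B ≤ G.numComponentsEdges (insert e B) + 1 := by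
  obtain ⟨a, b, hab⟩ : ∃ a b, G.ends e = s(a, b) :=
    Sym2.ind (fun a b => ⟨a, b, rfl⟩) (G.ends e)
  rw [ncE_eq, ncE_eq, grel_insert G hab]
  by_cases hc : Quot.mk (grel G B) a = Quot.mk (grel G B) b
  · rw [card_addRel_of_eq hc]; omega
  · rw [card_addRel_of_ne hc]

lemma ncE_DR {B A : Set E} (h : B ⊆ A) (e : E) :
    G.numComponentsEdges A + G.numComponentsEdges (insert e B) ≤
      G.numComponentsEdges (insert e A) + G.numComponentsEdges B := by
  obtain ⟨a, b, hab⟩ : ∃ a b, G.ends e = s(a, b) :=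
    Sym2.ind (fun a b => ⟨a, b, rfl⟩) (G.ends e)
  have hmono : ∀ x y, grel G B x y → grel G A x y := fun _ _ ⟨f, hf, hfv⟩ => ⟨f, h hf, hfv⟩
  rw [ncE_eq, ncE_eq, ncE_eq, ncE_eq, grel_insert G hab, grel_insert G hab]
  by_cases hc : Quot.mk (grel G A) a = Quot.mk (grel G A) b
  · rw [card_addRel_of_eq hc]
    have h1 : Nat.card (Quot (addRel (grel G B) a b)) ≤ Nat.card (Quot (grel G B)) :=
      quot_card_le (fun _ _ hxy => Or.inl hxy)
    omega
  · have hcB : ¬ Quot.mk (grel G B) a = Quot.mk (grel G B) b :=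
      fun hB => hc (mk_mono hmono hB)
    rw [card_addRel_of_ne hc, card_addRel_of_ne hcB]
    omega

lemma ncE_le_union (X S : Set E) :
    G.numComponentsEdges X ≤ G.numComponentsEdges (X ∪ S) + S.ncard := by
  refine Set.Finite.induction_on (motive := fun S _ => G.numComponentsEdges X ≤
      G.numComponentsEdges (X ∪ S) + S.ncard) S (Set.toFinite S) (by simp) ?_
  intro e S' heS' hS' ih
  ·
    have h1 : X ∪ insert e S' = insert e (X ∪ S') := by
      rw [Set.union_insert]
    have h2 : (insert e S').ncard = S'.ncard + 1 := Set.ncard_insert_of_notMem heS'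
    have h3 := ncE_insert_le G e (X ∪ S')
    rw [h1, h2]
    omega

lemma ncE_submodular (P Q : Set E) :
    G.numComponentsEdges P + G.numComponentsEdges Q ≤
      G.numComponentsEdges (P ∪ Q) + G.numComponentsEdges (P ∩ Q) := by
  generalize hn : (Q \ P).ncard = n
  induction n generalizing Q with
  | zero =>
    have hQP : Q ⊆ P := by
      rw [← Set.diff_eq_empty]
      exact (Set.ncard_eq_zero (Set.toFinite _)).mp hn
    rw [Set.union_eq_self_of_subset_right hQP, Set.inter_eq_self_of_subset_right hQP]
  | succ n ih =>
    obtain ⟨e, he⟩ : (Q \ P).Nonempty :=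
      (Set.ncard_pos (Set.toFinite _)).mp (by omega)
    set Q' := Q \ {e} with hQ'
    have h1 : (Q' \ P).ncard = n := by
      have : Q' \ P = (Q \ P) \ {e} := by
        ext x; simp only [hQ', Set.mem_diff, Set.mem_singleton_iff]; tauto
      rw [this, Set.ncard_diff_singleton_of_mem he, hn]
      omega
    have ih' := ih Q' h1
    have hdr := ncE_DR G (Set.subset_union_right (s := P) (t := Q')) e
    have e1 : insert e Q' = Q := Set.insert_diff_singleton.trans
      (Set.insert_eq_self.mpr he.1)
    have e2 : insert e (P ∪ Q') = P ∪ Q := by rw [← Set.union_insert, e1]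
    have e3 : P ∩ Q' = P ∩ Q := by
      ext x; simp only [hQ', Set.mem_inter_iff, Set.mem_diff, Set.mem_singleton_iff]
      constructor
      · rintro ⟨hx, hx2, _⟩; exact ⟨hx, hx2⟩
      · rintro ⟨hx, hx2⟩; exact ⟨hx, hx2, fun hxe => he.2 (hxe ▸ hx)⟩
    rw [e1, e2] at hdr
    rw [e3] at ih'
    omega

lemma bondRank_add_ncE (B : Set E) :
    G.bondRank B + G.numComponentsEdges Bᶜ = B.ncard + G.numComponentsEdges Set.univ := by
  have h1 : G.numComponentsEdges Bᶜ ≤ Nat.card V := ncE_le_cardV G Bᶜ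
  have h2 : G.numComponentsEdges Set.univ ≤ Nat.card V := ncE_le_cardV G Set.univ
  have h3 : G.numComponentsEdges Set.univ ≤ G.numComponentsEdges Bᶜ :=
    ncE_antitone G (Set.subset_univ _)
  have h4 : G.numComponentsEdges Bᶜ ≤ G.numComponentsEdges Set.univ + B.ncard := by
    have := ncE_le_union G Bᶜ B
    rwa [Set.compl_union_self] at this
  unfold Multigraph.bondRank Multigraph.cycleRank
  omega

lemma bondRank_mono {X Y : Set E} (h : X ⊆ Y) : G.bondRank X ≤ G.bondRank Y := by
  have hX := bondRank_add_ncE G X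
  have hY := bondRank_add_ncE G Y
  have h1 : G.numComponentsEdges Yᶜ ≤ G.numComponentsEdges Xᶜ + (Y \ X).ncard := by
    have := ncE_le_union G Yᶜ (Y \ X)
    have he : Yᶜ ∪ (Y \ X) = Xᶜ := by
      ext x
      simp only [Set.mem_union, Set.mem_compl_iff, Set.mem_diff]
      constructor
      · rintro (hx | ⟨_, hx⟩) hxX
        · exact hx (h hxX)
        · exact hx hxX
      · intro hx
        by_cases hxy : x ∈ Y
        · exact Or.inr ⟨hxy, hx⟩
        · exact Or.inl hxy
    rwa [he] at this
  have h2 : (Y \ X).ncard + X.ncard = Y.ncard := Set.ncard_diff_add_ncard_of_subset h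
  omega

lemma bondRank_submodular (X Y : Set E) :
    G.bondRank (X ∪ Y) + G.bondRank (X ∩ Y) ≤ G.bondRank X + G.bondRank Y := by
  have hX := bondRank_add_ncE G X
  have hY := bondRank_add_ncE G Y
  have hU := bondRank_add_ncE G (X ∪ Y)
  have hI := bondRank_add_ncE G (X ∩ Y)
  have hsub := ncE_submodular G Xᶜ Yᶜ
  rw [← Set.compl_inter, ← Set.compl_union] at hsub
  have hcard := Set.ncard_union_add_ncard_inter X Y
  omega

lemma inc_union (A B : Set V) : G.inc (A ∪ B) = G.inc A ∪ G.inc B := by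
  ext e
  simp only [Multigraph.inc, Set.mem_setOf_eq, Set.mem_union]
  constructor
  · rintro ⟨v, (hv | hv), hve⟩
    · exact Or.inl ⟨v, hv, hve⟩
    · exact Or.inr ⟨v, hv, hve⟩
  · rintro (⟨v, hv, hve⟩ | ⟨v, hv, hve⟩)
    · exact ⟨v, Or.inl hv, hve⟩
    · exact ⟨v, Or.inr hv, hve⟩

lemma inc_mono {A B : Set V} (h : A ⊆ B) : G.inc A ⊆ G.inc B :=
  fun _ ⟨v, hv, hve⟩ => ⟨v, h hv, hve⟩

lemma f_mono {A B : Set V} (h : A ⊆ B) :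
    G.bondRank (G.inc A) ≤ G.bondRank (G.inc B) :=
  bondRank_mono G (inc_mono G h)

lemma f_submodular (A B : Set V) :
    G.bondRank (G.inc (A ∪ B)) + G.bondRank (G.inc (A ∩ B)) ≤
      G.bondRank (G.inc A) + G.bondRank (G.inc B) := by
  have h1 : G.bondRank (G.inc (A ∩ B)) ≤ G.bondRank (G.inc A ∩ G.inc B) :=
    bondRank_mono G (fun _ ⟨v, hv, hve⟩ => ⟨⟨v, hv.1, hve⟩, ⟨v, hv.2, hve⟩⟩)
  have h2 := bondRank_submodular G (G.inc A) (G.inc B)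
  rw [inc_union]
  omega

lemma exists_minimal_circuit (n : ℕ) :
    ∀ A : Set V, A.ncard ≤ n → A.Nonempty → G.bondRank (G.inc A) ≤ A.ncard →
      ∃ C ⊆ A, C.Nonempty ∧ G.bondRank (G.inc C) ≤ C.ncard ∧
        ∀ A' : Set V, A' ⊂ C → A'.Nonempty → ¬ (G.bondRank (G.inc A') ≤ A'.ncard) := by
  induction n with
  | zero =>
    intro A hA hne _
    have := (Set.ncard_pos (Set.toFinite A)).mpr hne
    omega
  | succ n ih =>
    intro A hA hne hbond
    by_cases hmin : ∀ A' : Set V, A' ⊂ A → A'.Nonempty → ¬ (G.bondRank (G.inc A') ≤ A'.ncard)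
    · exact ⟨A, subset_rfl, hne, hbond, hmin⟩
    · push_neg at hmin
      obtain ⟨A', hA'A, hA'ne, hA'bond⟩ := hmin
      have hlt : A'.ncard < A.ncard := Set.ncard_lt_ncard hA'A
      obtain ⟨C, hCA', hC⟩ := ih A' (by omega) hA'ne hA'bond
      exact ⟨C, hCA'.trans hA'A.subset, hC⟩

end Graph

end GCM


/-- The collection
`𝒞 = {A ⊆ V : A ≠ ∅, r*(δ(A)) ≤ |A|, and no proper nonempty subset A' ⊊ A
has r*(δ(A')) ≤ |A'|}` satisfies the circuit axioms of a matroid on `V`: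
(C1) `∅ ∉ 𝒞`; (C2) no member of `𝒞` is properly contained in another;
(C3) circuit elimination. -/
theorem circuit_axioms_graph_curve_matroid {V E : Type*} [Fintype V] [Fintype E]
    (G : Multigraph V E)
    (𝒞 : Set (Set V))
    (h𝒞 : 𝒞 = {A : Set V | A.Nonempty ∧ G.bondRank (G.inc A) ≤ A.ncard ∧
      ∀ A' : Set V, A' ⊂ A → A'.Nonempty → ¬ (G.bondRank (G.inc A') ≤ A'.ncard)}) :
    (∅ ∉ 𝒞) ∧
    (∀ C₁ ∈ 𝒞, ∀ C₂ ∈ 𝒞, C₁ ⊆ C₂ → C₁ = C₂) ∧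
    (∀ C₁ ∈ 𝒞, ∀ C₂ ∈ 𝒞, C₁ ≠ C₂ → ∀ v ∈ C₁ ∩ C₂,
      ∃ C₃ ∈ 𝒞, C₃ ⊆ (C₁ ∪ C₂) \ {v}) := by
  subst h𝒞
  have hC2 : ∀ C₁ ∈ {A : Set V | A.Nonempty ∧ G.bondRank (G.inc A) ≤ A.ncard ∧
      ∀ A' : Set V, A' ⊂ A → A'.Nonempty → ¬ (G.bondRank (G.inc A') ≤ A'.ncard)},
      ∀ C₂ ∈ {A : Set V | A.Nonempty ∧ G.bondRank (G.inc A) ≤ A.ncard ∧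
      ∀ A' : Set V, A' ⊂ A → A'.Nonempty → ¬ (G.bondRank (G.inc A') ≤ A'.ncard)},
      C₁ ⊆ C₂ → C₁ = C₂ := by
    rintro C₁ ⟨h1ne, h1b, h1min⟩ C₂ ⟨h2ne, h2b, h2min⟩ hsub
    by_contra hne
    exact h2min C₁ (ssubset_of_subset_of_ne hsub hne) h1ne h1b
  refine ⟨fun h => Set.not_nonempty_empty h.1, hC2, ?_⟩
  rintro C₁ hC₁ C₂ hC₂ hne v ⟨hv1, hv2⟩
  obtain ⟨h1ne, h1b, h1min⟩ := hC₁
  obtain ⟨h2ne, h2b, h2min⟩ := hC₂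
  have hnsub : ¬ C₁ ⊆ C₂ := fun h => hne (hC2 C₁ ⟨h1ne, h1b, h1min⟩ C₂ ⟨h2ne, h2b, h2min⟩ h)
  have hiss : C₁ ∩ C₂ ⊂ C₁ := by
    refine ⟨Set.inter_subset_left, fun h => hnsub (fun x hx => (h hx).2)⟩
  have hint := h1min (C₁ ∩ C₂) hiss ⟨v, hv1, hv2⟩
  push_neg at hint
  have hsubm := GCM.f_submodular G C₁ C₂
  have hcard := Set.ncard_union_add_ncard_inter C₁ C₂
  -- the candidate dependent set
  have hvU : v ∈ C₁ ∪ C₂ := Or.inl hv1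
  have hUcard : ((C₁ ∪ C₂) \ {v}).ncard = (C₁ ∪ C₂).ncard - 1 :=
    Set.ncard_diff_singleton_of_mem hvU
  have hUpos : 0 < (C₁ ∪ C₂).ncard := (Set.ncard_pos (Set.toFinite _)).mpr ⟨v, hvU⟩
  have hfA : G.bondRank (G.inc ((C₁ ∪ C₂) \ {v})) ≤ ((C₁ ∪ C₂) \ {v}).ncard := by
    have hm := GCM.f_mono G (Set.diff_subset (s := C₁ ∪ C₂) (t := {v}))
    omega
  have hAne : ((C₁ ∪ C₂) \ {v}).Nonempty := by
    obtain ⟨w, hw1, hw2⟩ := Set.not_subset.mp hnsub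
    exact ⟨w, Or.inl hw1, fun hwv => hw2 (by rwa [Set.mem_singleton_iff.mp hwv])⟩
  obtain ⟨C₃, hC₃sub, hC₃⟩ := GCM.exists_minimal_circuit G ((C₁ ∪ C₂) \ {v}).ncard
    ((C₁ ∪ C₂) \ {v}) le_rfl hAne hfA
  exact ⟨C₃, ⟨hC₃.1, hC₃.2.1, hC₃.2.2⟩, hC₃sub⟩
end

section
/- The graph curve matroid of the complete graph K₄ is the uniform matroid U_{2,4}: a set of vertices of K₄ is independent in M_{K₄} if and only if it has at most 2 elements. -/
/-- The complete graph `K₄`, as a multigraph on vertex type `Fin 4` whose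
edges are the ordered pairs `(i, j)` with `i < j`. -/
def K4 : Multigraph (Fin 4) {p : Fin 4 × Fin 4 // p.1 < p.2} :=
  ⟨fun p => s(p.1.1, p.1.2)⟩

section Aux

abbrev EK4 := {p : Fin 4 × Fin 4 // p.1 < p.2}

instance K4decInc (A : Set (Fin 4)) [DecidablePred (· ∈ A)] :
    DecidablePred (· ∈ K4.inc A) := by
  intro e; unfold Multigraph.inc; simp only [Set.mem_setOf_eq]; infer_instance

lemma card_quot {α : Type*} (r : α → α → Prop) {k : ℕ} (f : α → Fin k)
    (h1 : ∀ u v, r u v → f u = f v)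
    (h2 : Function.Surjective f)
    (h3 : ∀ u v, f u = f v → Relation.EqvGen r u v) :
    Nat.card (Quot r) = k := by
  have hb : Function.Bijective (Quot.lift f h1) := by
    constructor
    · intro x y
      induction x using Quot.ind with | _ u =>
      induction y using Quot.ind with | _ v =>
      intro h
      exact Quot.eqvGen_sound (h3 u v h)
    · intro y; obtain ⟨x, hx⟩ := h2 y; exact ⟨Quot.mk r x, hx⟩
  rw [Nat.card_eq_of_bijective _ hb, Nat.card_eq_fintype_card, Fintype.card_fin]

lemma compK4 (B : Set EK4) {k : ℕ} (f : Fin 4 → Fin k)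
    (h1 : ∀ u v, (∃ e ∈ B, K4.ends e = s(u, v)) → f u = f v)
    (h2 : Function.Surjective f)
    (h3 : ∀ u v, f u = f v → u = v ∨ (∃ e ∈ B, K4.ends e = s(u, v))) :
    K4.numComponentsEdges B = k := by
  apply card_quot _ f h1 h2
  intro u v huv
  rcases h3 u v huv with rfl | h
  · exact Relation.EqvGen.refl _
  · exact Relation.EqvGen.rel _ _ h

lemma K4_ncardV : Nat.card (Fin 4) = 4 := by simp

lemma K4_compUniv : K4.numComponentsEdges Set.univ = 1 :=
  compK4 _ ![0, 0, 0, 0] (by decide) (by decide) (by decide)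

lemma K4_cycleRank_univ : K4.cycleRank Set.univ = 3 := by
  unfold Multigraph.cycleRank
  rw [K4_compUniv, K4_ncardV]

lemma K4_bond_singleton (v : Fin 4) : K4.bondRank (K4.inc {v}) = 2 := by
  have h1 : (K4.inc {v}).ncard = 3 := by
    fin_cases v <;> (rw [Set.ncard_eq_toFinset_card']; decide)
  have h2 : K4.numComponentsEdges (K4.inc {v})ᶜ = 2 := by
    fin_cases v <;>
      first
        | exact compK4 _ ![0, 1, 1, 1] (by decide) (by decide) (by decide)
        | exact compK4 _ ![1, 0, 1, 1] (by decide) (by decide) (by decide)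
        | exact compK4 _ ![1, 1, 0, 1] (by decide) (by decide) (by decide)
        | exact compK4 _ ![1, 1, 1, 0] (by decide) (by decide) (by decide)
  unfold Multigraph.bondRank Multigraph.cycleRank
  rw [h1, h2, K4_compUniv, K4_ncardV]

lemma K4_bond_pair (u v : Fin 4) (huv : u ≠ v) :
    K4.bondRank (K4.inc {u, v}) = 3 := by
  have h1 : (K4.inc {u, v}).ncard = 5 := by
    fin_cases u <;> fin_cases v <;>
      first
        | exact absurd rfl huv
        | (rw [Set.ncard_eq_toFinset_card']; decide)
  have h2 : K4.numComponentsEdges (K4.inc {u, v})ᶜ = 3 := by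
    fin_cases u <;> fin_cases v <;>
      first
        | exact absurd rfl huv
        | exact compK4 _ ![0, 1, 2, 2] (by decide) (by decide) (by decide)
        | exact compK4 _ ![0, 2, 1, 2] (by decide) (by decide) (by decide)
        | exact compK4 _ ![0, 2, 2, 1] (by decide) (by decide) (by decide)
        | exact compK4 _ ![2, 0, 1, 2] (by decide) (by decide) (by decide)
        | exact compK4 _ ![2, 0, 2, 1] (by decide) (by decide) (by decide)
        | exact compK4 _ ![2, 2, 0, 1] (by decide) (by decide) (by decide)
  unfold Multigraph.bondRank Multigraph.cycleRank
  rw [h1, h2, K4_compUniv, K4_ncardV]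

lemma K4_compEmpty : K4.numComponentsEdges (∅ : Set EK4) = 4 :=
  compK4 _ ![0, 1, 2, 3] (by decide) (by decide) (by decide)

lemma K4_bond_three (a b c : Fin 4) (hab : a ≠ b) (hac : a ≠ c) (hbc : b ≠ c) :
    K4.bondRank (K4.inc {a, b, c}) = 3 := by
  have key : ∀ a b c : Fin 4, a ≠ b → a ≠ c → b ≠ c →
      ∀ e : EK4, e ∈ K4.inc {a, b, c} := by decide
  have huniv : K4.inc {a, b, c} = Set.univ :=
    Set.eq_univ_of_forall (key a b c hab hac hbc)
  have hE : (Set.univ : Set EK4).ncard = 6 := by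
    rw [Set.ncard_univ, Nat.card_eq_fintype_card]; decide
  unfold Multigraph.bondRank Multigraph.cycleRank
  rw [huniv, hE, Set.compl_univ, K4_compEmpty, K4_compUniv, K4_ncardV]

lemma K4_circuit_three (C : Set (Fin 4)) (hC : C.ncard = 3) : K4.IsCircuitMG C := by
  obtain ⟨a, b, c, hab, hac, hbc, rfl⟩ := Set.ncard_eq_three.mp hC
  refine ⟨⟨a, by simp⟩, ?_, ?_⟩
  · rw [K4_bond_three a b c hab hac hbc, hC]
  · intro A' hss hne
    have hlt : A'.ncard < 3 := by
      have := Set.ncard_lt_ncard hss (Set.toFinite _)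
      rwa [hC] at this
    have hpos : 0 < A'.ncard := (Set.ncard_pos (Set.toFinite _)).mpr hne
    interval_cases h : A'.ncard
    · obtain ⟨v, rfl⟩ := Set.ncard_eq_one.mp h
      rw [K4_bond_singleton v]
      omega
    · obtain ⟨x, y, hxy, rfl⟩ := Set.ncard_eq_two.mp h
      rw [K4_bond_pair x y hxy]
      omega

end Aux

/-- The graph curve matroid of `K₄` is the uniform matroid
`U_{2,4}`: a vertex set is independent in `M_{K₄}` iff it has at most 2 elements. -/
theorem graphCurveMatroid_K4_eq_U24 (A : Set (Fin 4)) :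
    K4.IndepMG A ↔ A.ncard ≤ 2 := by
  constructor
  · intro hind
    by_contra hcard
    push_neg at hcard
    obtain ⟨C, hCA, hC3⟩ := Set.exists_subset_card_eq (show 3 ≤ A.ncard from hcard)
    exact hind ⟨C, hCA, K4_circuit_three C hC3⟩
  · intro h2 hdep
    obtain ⟨C, hCA, hC⟩ := hdep
    obtain ⟨hne, hb, -⟩ := hC
    have hle : C.ncard ≤ 2 := le_trans (Set.ncard_le_ncard hCA (Set.toFinite A)) h2
    have hpos : 0 < C.ncard := (Set.ncard_pos (Set.toFinite _)).mpr hne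
    interval_cases h : C.ncard
    · obtain ⟨v, rfl⟩ := Set.ncard_eq_one.mp h
      rw [K4_bond_singleton v] at hb
      omega
    · obtain ⟨x, y, hxy, rfl⟩ := Set.ncard_eq_two.mp h
      rw [K4_bond_pair x y hxy] at hb
      omega
end

section
/- If a finite graph G is the disjoint union of graphs G₁ and G₂, then the graph curve matroid of G is the direct sum of the graph curve matroids of G₁ and G₂: M_G = M_{G₁} ⊕ M_{G₂}. -/
/-- The disjoint union of two multigraphs. -/
def Multigraph.disjUnion {V₁ E₁ V₂ E₂ : Type*}
    (G₁ : Multigraph V₁ E₁) (G₂ : Multigraph V₂ E₂) :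
    Multigraph (V₁ ⊕ V₂) (E₁ ⊕ E₂) :=
  ⟨Sum.elim (fun e => (G₁.ends e).map Sum.inl) (fun e => (G₂.ends e).map Sum.inr)⟩


section DisjUnionAux

open Multigraph

variable {V₁ E₁ V₂ E₂ : Type*}

private lemma sym2_map_left {β γ : Type*} {g : β → γ} {p : Sym2 β} {u : γ} {v : γ}
    (h : p.map g = s(u, v)) : ∃ x, g x = u := by
  have hu : u ∈ p.map g := h ▸ Sym2.mem_mk_left u v
  rcases Sym2.mem_map.mp hu with ⟨x, _, hx⟩
  exact ⟨x, hx⟩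

private lemma sym2_map_right {β γ : Type*} {g : β → γ} {p : Sym2 β} {u : γ} {v : γ}
    (h : p.map g = s(u, v)) : ∃ x, g x = v := by
  have hv : v ∈ p.map g := h ▸ Sym2.mem_mk_right u v
  rcases Sym2.mem_map.mp hv with ⟨x, _, hx⟩
  exact ⟨x, hx⟩

private lemma image_ssubset_iff {α β : Type*} {f : α → β} (hf : Function.Injective f)
    {s t : Set α} : f '' s ⊂ f '' t ↔ s ⊂ t := by
  constructor
  · intro h
    refine ⟨(Set.image_subset_image_iff hf).mp h.subset, fun hts => h.not_subset ?_⟩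
    exact Set.image_mono hts
  · intro h
    refine ⟨Set.image_mono h.subset, fun hts => h.not_subset ?_⟩
    exact (Set.image_subset_image_iff hf).mp hts

variable (G₁ : Multigraph V₁ E₁) (G₂ : Multigraph V₂ E₂)

private lemma rel_inl_inl (B : Set (E₁ ⊕ E₂)) (a b : V₁) :
    (∃ e ∈ B, (G₁.disjUnion G₂).ends e = s(Sum.inl a, Sum.inl b)) ↔
      ∃ e ∈ Sum.inl ⁻¹' B, G₁.ends e = s(a, b) := by
  constructor
  · rintro ⟨e, he, h⟩
    cases e with
    | inl e =>
      refine ⟨e, he, Sym2.map.injective (f := (Sum.inl : V₁ → V₁ ⊕ V₂)) Sum.inl_injective ?_⟩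
      rwa [Sym2.map_pair_eq]
    | inr e =>
      obtain ⟨x, hx⟩ := sym2_map_left (g := (Sum.inr : V₂ → V₁ ⊕ V₂)) h
      exact absurd hx (by simp)
  · rintro ⟨e, he, h⟩
    exact ⟨Sum.inl e, he, by
      show (G₁.ends e).map Sum.inl = _
      rw [h, Sym2.map_pair_eq]⟩

private lemma rel_inr_inr (B : Set (E₁ ⊕ E₂)) (a b : V₂) :
    (∃ e ∈ B, (G₁.disjUnion G₂).ends e = s(Sum.inr a, Sum.inr b)) ↔
      ∃ e ∈ Sum.inr ⁻¹' B, G₂.ends e = s(a, b) := by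
  constructor
  · rintro ⟨e, he, h⟩
    cases e with
    | inl e =>
      obtain ⟨x, hx⟩ := sym2_map_left (g := (Sum.inl : V₁ → V₁ ⊕ V₂)) h
      exact absurd hx (by simp)
    | inr e =>
      refine ⟨e, he, Sym2.map.injective (f := (Sum.inr : V₂ → V₁ ⊕ V₂)) Sum.inr_injective ?_⟩
      rwa [Sym2.map_pair_eq]
  · rintro ⟨e, he, h⟩
    exact ⟨Sum.inr e, he, by
      show (G₂.ends e).map Sum.inr = _
      rw [h, Sym2.map_pair_eq]⟩

private lemma rel_inl_inr (B : Set (E₁ ⊕ E₂)) (a : V₁) (b : V₂) :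
    ¬ ∃ e ∈ B, (G₁.disjUnion G₂).ends e = s(Sum.inl a, Sum.inr b) := by
  rintro ⟨e, he, h⟩
  cases e with
  | inl e =>
    obtain ⟨x, hx⟩ := sym2_map_right (g := (Sum.inl : V₁ → V₁ ⊕ V₂)) h
    exact absurd hx (by simp)
  | inr e =>
    obtain ⟨x, hx⟩ := sym2_map_left (g := (Sum.inr : V₂ → V₁ ⊕ V₂)) h
    exact absurd hx (by simp)

private lemma rel_inr_inl (B : Set (E₁ ⊕ E₂)) (a : V₂) (b : V₁) :
    ¬ ∃ e ∈ B, (G₁.disjUnion G₂).ends e = s(Sum.inr a, Sum.inl b) := by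
  rintro ⟨e, he, h⟩
  exact rel_inl_inr G₁ G₂ B b a ⟨e, he, by rw [h, Sym2.eq_swap]⟩

private lemma numComponentsEdges_disjUnion [Finite V₁] [Finite V₂] (B : Set (E₁ ⊕ E₂)) :
    (G₁.disjUnion G₂).numComponentsEdges B =
      G₁.numComponentsEdges (Sum.inl ⁻¹' B) + G₂.numComponentsEdges (Sum.inr ⁻¹' B) := by
  set r : V₁ ⊕ V₂ → V₁ ⊕ V₂ → Prop :=
    fun u v => ∃ e ∈ B, (G₁.disjUnion G₂).ends e = s(u, v) with hr
  set r₁ : V₁ → V₁ → Prop := fun a b => ∃ e ∈ Sum.inl ⁻¹' B, G₁.ends e = s(a, b) with hr₁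
  set r₂ : V₂ → V₂ → Prop := fun a b => ∃ e ∈ Sum.inr ⁻¹' B, G₂.ends e = s(a, b) with hr₂
  have equiv : Quot r ≃ (Quot r₁ ⊕ Quot r₂) := by
    refine ⟨Quot.lift (Sum.elim (fun a => Sum.inl (Quot.mk r₁ a))
        (fun b => Sum.inr (Quot.mk r₂ b))) ?_,
      Sum.elim (Quot.lift (fun a => Quot.mk r (Sum.inl a)) ?_)
        (Quot.lift (fun b => Quot.mk r (Sum.inr b)) ?_), ?_, ?_⟩
    · rintro (a | a) (b | b) h
      · exact congrArg Sum.inl (Quot.sound ((rel_inl_inl G₁ G₂ B a b).mp h))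
      · exact absurd h (rel_inl_inr G₁ G₂ B a b)
      · exact absurd h (rel_inr_inl G₁ G₂ B a b)
      · exact congrArg Sum.inr (Quot.sound ((rel_inr_inr G₁ G₂ B a b).mp h))
    · exact fun a b h => Quot.sound ((rel_inl_inl G₁ G₂ B a b).mpr h)
    · exact fun a b h => Quot.sound ((rel_inr_inr G₁ G₂ B a b).mpr h)
    · intro q
      induction q using Quot.ind with
      | _ x => cases x <;> rfl
    · rintro (q | q) <;> induction q using Quot.ind with
      | _ x => rfl
  show Nat.card (Quot r) = Nat.card (Quot r₁) + Nat.card (Quot r₂)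
  haveI : Finite (Quot r₁) := Finite.of_surjective _ (Quot.mk_surjective (r := r₁))
  haveI : Finite (Quot r₂) := Finite.of_surjective _ (Quot.mk_surjective (r := r₂))
  rw [Nat.card_congr equiv, Nat.card_sum]

private lemma numComponentsEdges_le {V E : Type*} [Finite V] (G : Multigraph V E)
    (B : Set E) : G.numComponentsEdges B ≤ Nat.card V :=
  Nat.card_le_card_of_surjective _ Quot.mk_surjective

private lemma numComponentsEdges_anti {V E : Type*} [Finite V] (G : Multigraph V E)
    {B B' : Set E} (h : B ⊆ B') :
    G.numComponentsEdges B' ≤ G.numComponentsEdges B := by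
  set r : V → V → Prop := fun u v => ∃ e ∈ B, G.ends e = s(u, v)
  set r' : V → V → Prop := fun u v => ∃ e ∈ B', G.ends e = s(u, v)
  haveI : Finite (Quot r) := Finite.of_surjective _ (Quot.mk_surjective (r := r))
  refine Nat.card_le_card_of_surjective
    (Quot.lift (fun v => Quot.mk r' v)
      (fun a b hab => Quot.sound (by
        obtain ⟨e, he, hab⟩ := hab; exact ⟨e, h he, hab⟩))) ?_
  intro q
  induction q using Quot.ind with
  | _ x => exact ⟨Quot.mk r x, rfl⟩

private lemma quot_card_le_succ {V : Type*} [Finite V] {r s : V → V → Prop} {u v : V}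
    (hs : ∀ x y, s x y ↔ r x y ∨ (x = u ∧ y = v) ∨ (x = v ∧ y = u)) :
    Nat.card (Quot r) ≤ Nat.card (Quot s) + 1 := by
  classical
  haveI : Finite (Quot s) := Finite.of_surjective _ (Quot.mk_surjective (r := s))
  have key : ∀ x y, Relation.EqvGen s x y →
      Relation.EqvGen r x y ∨
        ((Relation.EqvGen r x u ∨ Relation.EqvGen r x v) ∧
         (Relation.EqvGen r y u ∨ Relation.EqvGen r y v)) := by
    intro x y h
    induction h with
    | rel x y hxy =>
      rcases (hs x y).mp hxy with h | ⟨rfl, rfl⟩ | ⟨rfl, rfl⟩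
      · exact Or.inl (Relation.EqvGen.rel _ _ h)
      · exact Or.inr ⟨Or.inl (Relation.EqvGen.refl _), Or.inr (Relation.EqvGen.refl _)⟩
      · exact Or.inr ⟨Or.inr (Relation.EqvGen.refl _), Or.inl (Relation.EqvGen.refl _)⟩
    | refl x => exact Or.inl (Relation.EqvGen.refl _)
    | symm x y _ ih =>
      rcases ih with h | ⟨h1, h2⟩
      · exact Or.inl (Relation.EqvGen.symm _ _ h)
      · exact Or.inr ⟨h2, h1⟩
    | trans x y z _ _ ih1 ih2 =>
      rcases ih1 with h1 | ⟨ha, hb⟩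
      · rcases ih2 with h2 | ⟨hc, hd⟩
        · exact Or.inl (Relation.EqvGen.trans _ _ _ h1 h2)
        · refine Or.inr ⟨?_, hd⟩
          rcases hc with h | h
          · exact Or.inl (Relation.EqvGen.trans _ _ _ h1 h)
          · exact Or.inr (Relation.EqvGen.trans _ _ _ h1 h)
      · rcases ih2 with h2 | ⟨hc, hd⟩
        · refine Or.inr ⟨ha, ?_⟩
          rcases hb with h | h
          · exact Or.inl (Relation.EqvGen.trans _ _ _ (Relation.EqvGen.symm _ _ h2) h)
          · exact Or.inr (Relation.EqvGen.trans _ _ _ (Relation.EqvGen.symm _ _ h2) h)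
        · exact Or.inr ⟨ha, hd⟩
  set f : Quot r → Quot s := Quot.lift (fun x => Quot.mk s x)
      (fun a b hab => Quot.sound ((hs a b).mpr (Or.inl hab))) with hf
  set qu : Quot r := Quot.mk r u with hqu
  set qv : Quot r := Quot.mk r v with hqv
  have hclass : ∀ x : V, (Relation.EqvGen r x u ∨ Relation.EqvGen r x v) →
      Quot.mk r x = qu ∨ Quot.mk r x = qv := by
    intro x h
    exact h.imp (fun h => Quot.eq.mpr h) (fun h => Quot.eq.mpr h)
  have main : ∀ a b : Quot r, f a = f b → ¬(a = qv ∧ qu ≠ qv) → ¬(b = qv ∧ qu ≠ qv) →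
      a = b := by
    intro a b hfab hA hB
    induction a using Quot.ind with
    | _ x =>
    induction b using Quot.ind with
    | _ y =>
    have hxy : Relation.EqvGen s x y := Quot.eq.mp hfab
    rcases key x y hxy with hr | ⟨h1, h2⟩
    · exact Quot.eq.mpr hr
    · have ha' := hclass x h1
      have hb' := hclass y h2
      by_cases hq : qu = qv
      · rcases ha' with h | h <;> rcases hb' with h' | h' <;>
          simp only [h, h', hq]
      · have hx' : Quot.mk r x = qu := by
          rcases ha' with h | h
          · exact h
          · exact absurd ⟨h, hq⟩ hA
        have hy' : Quot.mk r y = qu := by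
          rcases hb' with h | h
          · exact h
          · exact absurd ⟨h, hq⟩ hB
        rw [hx', hy']
  let h : Quot r → (Quot s) ⊕ Unit :=
    fun a => if a = qv ∧ qu ≠ qv then Sum.inr () else Sum.inl (f a)
  have hinj : Function.Injective h := by
    intro a b hab
    unfold h at hab
    by_cases h1 : a = qv ∧ qu ≠ qv <;> by_cases h2 : b = qv ∧ qu ≠ qv
    · rw [h1.1, h2.1]
    · rw [if_pos h1, if_neg h2] at hab
      exact absurd hab (by simp)
    · rw [if_neg h1, if_pos h2] at hab
      exact absurd hab (by simp)
    · rw [if_neg h1, if_neg h2] at hab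
      exact main a b (Sum.inl_injective hab) h1 h2
  calc Nat.card (Quot r) ≤ Nat.card ((Quot s) ⊕ Unit) :=
        Nat.card_le_card_of_injective h hinj
    _ = Nat.card (Quot s) + 1 := by simp [Nat.card_sum]

private lemma numComponentsEdges_diff_singleton {V E : Type*} [Finite V]
    (G : Multigraph V E) (B : Set E) (e₀ : E) :
    G.numComponentsEdges (B \ {e₀}) ≤ G.numComponentsEdges B + 1 := by
  obtain ⟨u, v, huv⟩ : ∃ u v, G.ends e₀ = s(u, v) := by
    have : ∀ p : Sym2 V, ∃ u v, p = s(u, v) := fun p => Sym2.ind (fun x y => ⟨x, y, rfl⟩) p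
    exact this _
  by_cases he₀ : e₀ ∈ B
  · apply quot_card_le_succ (u := u) (v := v)
    intro x y
    constructor
    · rintro ⟨e, heB, hends⟩
      by_cases h : e = e₀
      · subst h
        rw [huv] at hends
        rcases Sym2.eq_iff.mp hends with ⟨rfl, rfl⟩ | ⟨rfl, rfl⟩
        · exact Or.inr (Or.inl ⟨rfl, rfl⟩)
        · exact Or.inr (Or.inr ⟨rfl, rfl⟩)
      · exact Or.inl ⟨e, ⟨heB, h⟩, hends⟩
    · rintro (⟨e, ⟨heB, _⟩, hends⟩ | ⟨rfl, rfl⟩ | ⟨rfl, rfl⟩)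
      · exact ⟨e, heB, hends⟩
      · exact ⟨e₀, he₀, huv⟩
      · exact ⟨e₀, he₀, by rw [huv, Sym2.eq_swap]⟩
  · rw [Set.diff_singleton_eq_self he₀]
    omega

private lemma numComponentsEdges_diff_le {V E : Type*} [Finite V] [Finite E]
    (G : Multigraph V E) (B D : Set E) :
    G.numComponentsEdges (B \ D) ≤ G.numComponentsEdges B + D.ncard := by
  apply Set.Finite.induction_on
    (motive := fun s _ => G.numComponentsEdges (B \ s) ≤ G.numComponentsEdges B + s.ncard)
    D (Set.toFinite D)
  · simp
  · intro a s ha hsfin ih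
    have h1 : B \ insert a s = (B \ s) \ {a} := by
      ext x
      simp only [Set.mem_diff, Set.mem_insert_iff, Set.mem_singleton_iff]
      tauto
    rw [h1, Set.ncard_insert_of_notMem ha (Set.toFinite s)]
    have h2 := numComponentsEdges_diff_singleton G (B \ s) a
    omega

private lemma cycleRank_univ_le {V E : Type*} [Finite V] [Finite E]
    (G : Multigraph V E) (B : Set E) :
    G.cycleRank Set.univ ≤ B.ncard + G.cycleRank Bᶜ := by
  have h := numComponentsEdges_diff_le G Set.univ B
  rw [show (Set.univ \ B : Set E) = Bᶜ from (Set.compl_eq_univ_diff B).symm] at h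
  have h2 := numComponentsEdges_le G Bᶜ
  have h3 := numComponentsEdges_le G (Set.univ : Set E)
  unfold Multigraph.cycleRank
  omega

private lemma ncard_sum_split {α β : Type*} [Finite α] [Finite β] (S : Set (α ⊕ β)) :
    S.ncard = (Sum.inl ⁻¹' S).ncard + (Sum.inr ⁻¹' S).ncard := by
  rw [← Set.ncard_image_of_injective (Sum.inl ⁻¹' S) Sum.inl_injective,
    ← Set.ncard_image_of_injective (Sum.inr ⁻¹' S) Sum.inr_injective,
    ← Set.ncard_union_eq (by rw [Set.disjoint_left]; rintro x ⟨a, _, rfl⟩ ⟨b, _, h⟩; simp at h)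
      (Set.toFinite _) (Set.toFinite _)]
  congr 1
  ext x
  cases x <;> simp

private lemma cycleRank_disjUnion [Finite V₁] [Finite V₂] (B : Set (E₁ ⊕ E₂)) :
    (G₁.disjUnion G₂).cycleRank B =
      G₁.cycleRank (Sum.inl ⁻¹' B) + G₂.cycleRank (Sum.inr ⁻¹' B) := by
  have hcomp := numComponentsEdges_disjUnion G₁ G₂ B
  have hb1 := numComponentsEdges_le G₁ (Sum.inl ⁻¹' B)
  have hb2 := numComponentsEdges_le G₂ (Sum.inr ⁻¹' B)
  have hcard : Nat.card (V₁ ⊕ V₂) = Nat.card V₁ + Nat.card V₂ := Nat.card_sum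
  unfold Multigraph.cycleRank
  rw [hcomp, hcard]
  omega

private lemma cycleRank_mono {V E : Type*} [Finite V] (G : Multigraph V E)
    {B B' : Set E} (h : B ⊆ B') : G.cycleRank B ≤ G.cycleRank B' :=
  Nat.sub_le_sub_left (numComponentsEdges_anti G h) _

private lemma bondRank_disjUnion [Fintype V₁] [Fintype E₁] [Fintype V₂] [Fintype E₂]
    (B : Set (E₁ ⊕ E₂)) :
    (G₁.disjUnion G₂).bondRank B =
      G₁.bondRank (Sum.inl ⁻¹' B) + G₂.bondRank (Sum.inr ⁻¹' B) := by
  have hcomp := cycleRank_disjUnion G₁ G₂ Bᶜ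
  have huniv := cycleRank_disjUnion G₁ G₂ (Set.univ : Set (E₁ ⊕ E₂))
  rw [show (Sum.inl ⁻¹' Bᶜ) = (Sum.inl ⁻¹' B)ᶜ from rfl,
    show (Sum.inr ⁻¹' Bᶜ) = (Sum.inr ⁻¹' B)ᶜ from rfl] at hcomp
  rw [show (Sum.inl ⁻¹' (Set.univ : Set (E₁ ⊕ E₂))) = Set.univ from rfl,
    show (Sum.inr ⁻¹' (Set.univ : Set (E₁ ⊕ E₂))) = Set.univ from rfl] at huniv
  have hm1 := cycleRank_mono G₁ (Set.subset_univ (Sum.inl ⁻¹' B)ᶜ)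
  have hm2 := cycleRank_mono G₂ (Set.subset_univ (Sum.inr ⁻¹' B)ᶜ)
  have hl1 := cycleRank_univ_le G₁ (Sum.inl ⁻¹' B)
  have hl2 := cycleRank_univ_le G₂ (Sum.inr ⁻¹' B)
  have hB := ncard_sum_split B
  unfold Multigraph.bondRank
  rw [hcomp, huniv, hB]
  omega

private lemma inc_disjUnion_inl [Fintype V₁] [Fintype V₂] (A : Set (V₁ ⊕ V₂)) :
    Sum.inl ⁻¹' ((G₁.disjUnion G₂).inc A) = G₁.inc (Sum.inl ⁻¹' A) := by
  ext e
  show (∃ v ∈ A, v ∈ (G₁.ends e).map Sum.inl) ↔ ∃ v, Sum.inl v ∈ A ∧ v ∈ G₁.ends e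
  constructor
  · rintro ⟨v, hvA, hv⟩
    rcases Sym2.mem_map.mp hv with ⟨a, ha, rfl⟩
    exact ⟨a, hvA, ha⟩
  · rintro ⟨a, haA, ha⟩
    exact ⟨Sum.inl a, haA, Sym2.mem_map.mpr ⟨a, ha, rfl⟩⟩

private lemma inc_disjUnion_inr [Fintype V₁] [Fintype V₂] (A : Set (V₁ ⊕ V₂)) :
    Sum.inr ⁻¹' ((G₁.disjUnion G₂).inc A) = G₂.inc (Sum.inr ⁻¹' A) := by
  ext e
  show (∃ v ∈ A, v ∈ (G₂.ends e).map Sum.inr) ↔ ∃ v, Sum.inr v ∈ A ∧ v ∈ G₂.ends e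
  constructor
  · rintro ⟨v, hvA, hv⟩
    rcases Sym2.mem_map.mp hv with ⟨a, ha, rfl⟩
    exact ⟨a, hvA, ha⟩
  · rintro ⟨a, haA, ha⟩
    exact ⟨Sum.inr a, haA, Sym2.mem_map.mpr ⟨a, ha, rfl⟩⟩

variable [Fintype V₁] [Fintype E₁] [Fintype V₂] [Fintype E₂]

private lemma bondRank_inc_disjUnion (A : Set (V₁ ⊕ V₂)) :
    (G₁.disjUnion G₂).bondRank ((G₁.disjUnion G₂).inc A) =
      G₁.bondRank (G₁.inc (Sum.inl ⁻¹' A)) + G₂.bondRank (G₂.inc (Sum.inr ⁻¹' A)) := by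
  rw [bondRank_disjUnion, inc_disjUnion_inl, inc_disjUnion_inr]

private lemma bondRank_inc_empty {V E : Type*} [Fintype V] [Fintype E]
    (G : Multigraph V E) : G.bondRank (G.inc ∅) ≤ 0 := by
  have h1 : G.inc (∅ : Set V) = ∅ := by
    ext e; simp [Multigraph.inc]
  rw [h1]
  unfold Multigraph.bondRank
  rw [Set.ncard_empty, Set.compl_empty]
  omega

private lemma ncard_image_inl (C : Set V₁) :
    ((Sum.inl : V₁ → V₁ ⊕ V₂) '' C).ncard = C.ncard :=
  Set.ncard_image_of_injective C Sum.inl_injective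

private lemma ncard_image_inr (C : Set V₂) :
    ((Sum.inr : V₂ → V₁ ⊕ V₂) '' C).ncard = C.ncard :=
  Set.ncard_image_of_injective C Sum.inr_injective

private lemma bondRank_inc_image_inl (C : Set V₁) :
    (G₁.disjUnion G₂).bondRank ((G₁.disjUnion G₂).inc (Sum.inl '' C)) =
      G₁.bondRank (G₁.inc C) := by
  rw [bondRank_inc_disjUnion]
  rw [Set.preimage_image_eq C Sum.inl_injective,
    show Sum.inr ⁻¹' ((Sum.inl : V₁ → V₁ ⊕ V₂) '' C) = ∅ by
      ext x; simp]
  have := bondRank_inc_empty G₂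
  omega

private lemma bondRank_inc_image_inr (C : Set V₂) :
    (G₁.disjUnion G₂).bondRank ((G₁.disjUnion G₂).inc (Sum.inr '' C)) =
      G₂.bondRank (G₂.inc C) := by
  rw [bondRank_inc_disjUnion]
  rw [Set.preimage_image_eq C Sum.inr_injective,
    show Sum.inl ⁻¹' ((Sum.inr : V₂ → V₁ ⊕ V₂) '' C) = ∅ by
      ext x; simp]
  have := bondRank_inc_empty G₁
  omega

private lemma isCircuit_image_inl {C : Set V₁} :
    (G₁.disjUnion G₂).IsCircuitMG (Sum.inl '' C) ↔ G₁.IsCircuitMG C := by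
  constructor
  · rintro ⟨hne, hrk, hmin⟩
    refine ⟨hne.of_image, ?_, ?_⟩
    · rw [bondRank_inc_image_inl] at hrk
      rwa [ncard_image_inl] at hrk
    · intro C' hC' hC'ne
      have h := hmin (Sum.inl '' C') (image_ssubset_iff Sum.inl_injective |>.mpr hC')
        (hC'ne.image _)
      rwa [bondRank_inc_image_inl, ncard_image_inl] at h
  · rintro ⟨hne, hrk, hmin⟩
    refine ⟨hne.image _, ?_, ?_⟩
    · rw [bondRank_inc_image_inl, ncard_image_inl]; exact hrk
    · intro A' hA' hA'ne
      have hsub : A' ⊆ Set.range (Sum.inl : V₁ → V₁ ⊕ V₂) :=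
        hA'.subset.trans (by rintro x ⟨a, _, rfl⟩; exact ⟨a, rfl⟩)
      have hA'eq : A' = Sum.inl '' (Sum.inl ⁻¹' A') :=
        (Set.image_preimage_eq_of_subset (by simpa using hsub)).symm
      have hC' : Sum.inl ⁻¹' A' ⊂ C := by
        rw [hA'eq, image_ssubset_iff Sum.inl_injective] at hA'
        exact hA'
      have hC'ne : (Sum.inl ⁻¹' A' : Set V₁).Nonempty := by
        obtain ⟨x, hx⟩ := hA'ne
        obtain ⟨a, -, rfl⟩ := hsub hx
        exact ⟨a, hx⟩
      have := hmin _ hC' hC'ne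
      rw [hA'eq, bondRank_inc_image_inl, ncard_image_inl]
      exact this

private lemma isCircuit_image_inr {C : Set V₂} :
    (G₁.disjUnion G₂).IsCircuitMG (Sum.inr '' C) ↔ G₂.IsCircuitMG C := by
  constructor
  · rintro ⟨hne, hrk, hmin⟩
    refine ⟨hne.of_image, ?_, ?_⟩
    · rw [bondRank_inc_image_inr] at hrk
      rwa [ncard_image_inr] at hrk
    · intro C' hC' hC'ne
      have h := hmin (Sum.inr '' C') (image_ssubset_iff Sum.inr_injective |>.mpr hC')
        (hC'ne.image _)
      rwa [bondRank_inc_image_inr, ncard_image_inr] at h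
  · rintro ⟨hne, hrk, hmin⟩
    refine ⟨hne.image _, ?_, ?_⟩
    · rw [bondRank_inc_image_inr, ncard_image_inr]; exact hrk
    · intro A' hA' hA'ne
      have hsub : A' ⊆ Set.range (Sum.inr : V₂ → V₁ ⊕ V₂) :=
        hA'.subset.trans (by rintro x ⟨a, _, rfl⟩; exact ⟨a, rfl⟩)
      have hA'eq : A' = Sum.inr '' (Sum.inr ⁻¹' A') :=
        (Set.image_preimage_eq_of_subset (by simpa using hsub)).symm
      have hC' : Sum.inr ⁻¹' A' ⊂ C := by
        rw [hA'eq, image_ssubset_iff Sum.inr_injective] at hA'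
        exact hA'
      have hC'ne : (Sum.inr ⁻¹' A' : Set V₂).Nonempty := by
        obtain ⟨x, hx⟩ := hA'ne
        obtain ⟨a, -, rfl⟩ := hsub hx
        exact ⟨a, hx⟩
      have := hmin _ hC' hC'ne
      rw [hA'eq, bondRank_inc_image_inr, ncard_image_inr]
      exact this

end DisjUnionAux

/-- If `G` is the disjoint union of `G₁` and `G₂`, then
`M_G = M_{G₁} ⊕ M_{G₂}`: a set is independent in `M_G` iff its parts in `V₁`
and `V₂` are independent in `M_{G₁}` and `M_{G₂}` respectively. -/
theorem graphCurveMatroid_disjUnion {V₁ E₁ V₂ E₂ : Type*}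
    [Fintype V₁] [Fintype E₁] [Fintype V₂] [Fintype E₂]
    (G₁ : Multigraph V₁ E₁) (G₂ : Multigraph V₂ E₂) (A : Set (V₁ ⊕ V₂)) :
    (G₁.disjUnion G₂).IndepMG A ↔
      G₁.IndepMG (Sum.inl ⁻¹' A) ∧ G₂.IndepMG (Sum.inr ⁻¹' A) := by
  constructor
  · intro hind
    constructor
    · rintro ⟨C, hCsub, hC⟩
      refine hind ⟨Sum.inl '' C, ?_, (isCircuit_image_inl G₁ G₂).mpr hC⟩
      rintro x ⟨a, haC, rfl⟩
      exact hCsub haC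
    · rintro ⟨C, hCsub, hC⟩
      refine hind ⟨Sum.inr '' C, ?_, (isCircuit_image_inr G₁ G₂).mpr hC⟩
      rintro x ⟨a, haC, rfl⟩
      exact hCsub haC
  · rintro ⟨h1, h2⟩ ⟨C, hCsub, hC⟩
    obtain ⟨hne, hrk, hmin⟩ := hC
    rcases (Sum.inl ⁻¹' C).eq_empty_or_nonempty with hc1 | hc1 <;>
      rcases (Sum.inr ⁻¹' C).eq_empty_or_nonempty with hc2 | hc2
    · -- both preimages empty: C is empty, contradiction
      obtain ⟨x, hx⟩ := hne
      cases x with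
      | inl a => exact absurd (Set.eq_empty_iff_forall_notMem.mp hc1 a hx) not_false
      | inr b => exact absurd (Set.eq_empty_iff_forall_notMem.mp hc2 b hx) not_false
    · -- C ⊆ inr part
      have hCeq : C = Sum.inr '' (Sum.inr ⁻¹' C) := by
        ext x
        cases x with
        | inl a =>
          simp only [Set.mem_image]
          constructor
          · intro hx
            exact absurd (Set.eq_empty_iff_forall_notMem.mp hc1 a hx) not_false
          · rintro ⟨b, _, h⟩
            exact absurd h (by simp)
        | inr b => simp
      refine h2 ⟨Sum.inr ⁻¹' C, Set.preimage_mono hCsub, ?_⟩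
      rw [← isCircuit_image_inr (G₁ := G₁) (G₂ := G₂), ← hCeq]
      exact ⟨hne, hrk, hmin⟩
    · -- C ⊆ inl part
      have hCeq : C = Sum.inl '' (Sum.inl ⁻¹' C) := by
        ext x
        cases x with
        | inr b =>
          simp only [Set.mem_image]
          constructor
          · intro hx
            exact absurd (Set.eq_empty_iff_forall_notMem.mp hc2 b hx) not_false
          · rintro ⟨a, _, h⟩
            exact absurd h (by simp)
        | inl a => simp
      refine h1 ⟨Sum.inl ⁻¹' C, Set.preimage_mono hCsub, ?_⟩
      rw [← isCircuit_image_inl (G₁ := G₁) (G₂ := G₂), ← hCeq]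
      exact ⟨hne, hrk, hmin⟩
    · -- both parts nonempty: contradiction with minimality
      exfalso
      have hssub1 : Sum.inl '' (Sum.inl ⁻¹' C) ⊂ C := by
        refine ⟨by rintro x ⟨a, ha, rfl⟩; exact ha, fun hsup => ?_⟩
        obtain ⟨b, hb⟩ := hc2
        obtain ⟨a, -, h⟩ := hsup hb
        exact absurd h (by simp)
      have hssub2 : Sum.inr '' (Sum.inr ⁻¹' C) ⊂ C := by
        refine ⟨by rintro x ⟨a, ha, rfl⟩; exact ha, fun hsup => ?_⟩
        obtain ⟨b, hb⟩ := hc1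
        obtain ⟨a, -, h⟩ := hsup hb
        exact absurd h (by simp)
      have k1 := hmin _ hssub1 (hc1.image _)
      have k2 := hmin _ hssub2 (hc2.image _)
      rw [bondRank_inc_image_inl, ncard_image_inl] at k1
      rw [bondRank_inc_image_inr, ncard_image_inr] at k2
      rw [bondRank_inc_disjUnion, ncard_sum_split C] at hrk
      omega
end

section
/- Let G be a trivalent, 2-edge-connected finite graph. Then every circuit C of the graph curve matroid M_G satisfies r*(δ(C)) = |C|. -/
namespace Multigraph

variable {V E : Type*} (G : Multigraph V E)

/-- More edges means at most as many components. -/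
lemma aux_ncE_anti [Finite V] {B B' : Set E} (h : B ⊆ B') :
    G.numComponentsEdges B' ≤ G.numComponentsEdges B := by
  apply Nat.card_le_card_of_surjective
    (Quot.map (id : V → V) (fun u v ⟨e, he, hev⟩ => ⟨e, h he, hev⟩))
  intro q
  obtain ⟨x, rfl⟩ := Quot.exists_rep q
  exact ⟨Quot.mk _ x, rfl⟩

lemma aux_eqvGen_insert {B : Set E} {e0 : E} {a b : V} (hab : G.ends e0 = s(a, b))
    {u v : V}
    (h : Relation.EqvGen (fun u v => ∃ e ∈ insert e0 B, G.ends e = s(u, v)) u v) :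
    Relation.EqvGen (fun u v => ∃ e ∈ B, G.ends e = s(u, v)) u v ∨
      (Relation.EqvGen (fun u v => ∃ e ∈ B, G.ends e = s(u, v)) u a ∧
        Relation.EqvGen (fun u v => ∃ e ∈ B, G.ends e = s(u, v)) b v) ∨
      (Relation.EqvGen (fun u v => ∃ e ∈ B, G.ends e = s(u, v)) u b ∧
        Relation.EqvGen (fun u v => ∃ e ∈ B, G.ends e = s(u, v)) a v) := by
  induction h with
  | rel u v huv =>
    obtain ⟨e, he, hev⟩ := huv
    rcases Set.mem_insert_iff.mp he with rfl | heB
    · rw [hab] at hev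
      rcases Sym2.eq_iff.mp hev with ⟨rfl, rfl⟩ | ⟨rfl, rfl⟩
      · exact Or.inr (Or.inl ⟨Relation.EqvGen.refl _, Relation.EqvGen.refl _⟩)
      · exact Or.inr (Or.inr ⟨Relation.EqvGen.refl _, Relation.EqvGen.refl _⟩)
    · exact Or.inl (Relation.EqvGen.rel _ _ ⟨e, heB, hev⟩)
  | refl u => exact Or.inl (Relation.EqvGen.refl u)
  | symm u v _ ih =>
    rcases ih with h1 | ⟨h1, h2⟩ | ⟨h1, h2⟩
    · exact Or.inl (Relation.EqvGen.symm _ _ h1)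
    · exact Or.inr (Or.inr ⟨Relation.EqvGen.symm _ _ h2, Relation.EqvGen.symm _ _ h1⟩)
    · exact Or.inr (Or.inl ⟨Relation.EqvGen.symm _ _ h2, Relation.EqvGen.symm _ _ h1⟩)
  | trans u v w _ _ ih1 ih2 =>
    rcases ih1 with h1 | ⟨h1a, h1b⟩ | ⟨h1a, h1b⟩ <;>
      rcases ih2 with h2 | ⟨h2a, h2b⟩ | ⟨h2a, h2b⟩
    · exact Or.inl (Relation.EqvGen.trans _ _ _ h1 h2)
    · exact Or.inr (Or.inl ⟨Relation.EqvGen.trans _ _ _ h1 h2a, h2b⟩)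
    · exact Or.inr (Or.inr ⟨Relation.EqvGen.trans _ _ _ h1 h2a, h2b⟩)
    · exact Or.inr (Or.inl ⟨h1a, Relation.EqvGen.trans _ _ _ h1b h2⟩)
    · exact Or.inl (Relation.EqvGen.trans _ _ _
        (Relation.EqvGen.trans _ _ _ h1a
          (Relation.EqvGen.symm _ _ (Relation.EqvGen.trans _ _ _ h1b h2a))) h2b)
    · exact Or.inl (Relation.EqvGen.trans _ _ _ h1a h2b)
    · exact Or.inr (Or.inr ⟨h1a, Relation.EqvGen.trans _ _ _ h1b h2⟩)
    · exact Or.inl (Relation.EqvGen.trans _ _ _ h1a h2b)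
    · exact Or.inr (Or.inl
        ⟨Relation.EqvGen.trans _ _ _ h1a
            (Relation.EqvGen.symm _ _ (Relation.EqvGen.trans _ _ _ h1b h2a)),
          Relation.EqvGen.trans _ _ _
            (Relation.EqvGen.symm _ _ (Relation.EqvGen.trans _ _ _ h1b h2a)) h2b⟩)

/-- Adding one edge decreases the number of components by at most one. -/
lemma aux_ncE_le_insert [Finite V] (B : Set E) (e0 : E) :
    G.numComponentsEdges B ≤ G.numComponentsEdges (insert e0 B) + 1 := by
  classical
  obtain ⟨⟨a, b⟩, hab⟩ := Quot.exists_rep (G.ends e0)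
  replace hab : G.ends e0 = s(a, b) := hab.symm
  set r : V → V → Prop := fun u v => ∃ e ∈ B, G.ends e = s(u, v) with hr
  set r' : V → V → Prop := fun u v => ∃ e ∈ insert e0 B, G.ends e = s(u, v) with hr'
  have hmap : ∀ u v, r u v → r' u v := fun u v ⟨e, he, hev⟩ =>
    ⟨e, Set.mem_insert_of_mem _ he, hev⟩
  let h : Quot r → Quot r' := Quot.map id hmap
  let g : Quot r → Option (Quot r') :=
    fun x => if x = Quot.mk r b then none else some (h x)
  haveI : Finite (Quot r') := Quot.finite _
  haveI := Fintype.ofFinite (Quot r')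
  have hg : Function.Injective g := by
    intro x y hxy
    obtain ⟨u, rfl⟩ := Quot.exists_rep x
    obtain ⟨v, rfl⟩ := Quot.exists_rep y
    by_cases hx : Quot.mk r u = Quot.mk r b <;> by_cases hy : Quot.mk r v = Quot.mk r b
    · rw [hx, hy]
    · simp only [g, if_pos hx, if_neg hy] at hxy; exact absurd hxy.symm (Option.some_ne_none _)
    · simp only [g, if_neg hx, if_pos hy] at hxy; exact absurd hxy (Option.some_ne_none _)
    · simp only [g, if_neg hx, if_neg hy, Option.some.injEq] at hxy
      have h' : Quot.mk r' u = Quot.mk r' v := hxy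
      rcases G.aux_eqvGen_insert hab (Quot.eq.mp h') with hh | ⟨hh1, hh2⟩ | ⟨hh1, hh2⟩
      · exact Quot.eq.mpr hh
      · exact absurd (Quot.eq.mpr (Relation.EqvGen.symm _ _ hh2)) hy
      · exact absurd (Quot.eq.mpr hh1) hx
  calc G.numComponentsEdges B = Nat.card (Quot r) := rfl
    _ ≤ Nat.card (Option (Quot r')) := Nat.card_le_card_of_injective g hg
    _ = Nat.card (Quot r') + 1 := Finite.card_option
    _ = G.numComponentsEdges (insert e0 B) + 1 := rfl

/-- Adding finitely many edges decreases the number of components by at most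
their number. -/
lemma aux_ncE_le_union [Finite V] (B : Set E) (D : Finset E) :
    G.numComponentsEdges B ≤ G.numComponentsEdges (B ∪ ↑D) + D.card := by
  classical
  induction D using Finset.induction_on with
  | empty => simp
  | @insert x D hx ih =>
    have h1 : G.numComponentsEdges (B ∪ ↑D) ≤
        G.numComponentsEdges (insert x (B ∪ ↑D)) + 1 := G.aux_ncE_le_insert _ _
    have h2 : (B ∪ ↑(insert x D) : Set E) = insert x (B ∪ ↑D) := by
      rw [Finset.coe_insert, Set.union_insert]
    rw [h2, Finset.card_insert_of_notMem hx]
    omega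

lemma aux_ncE_le_of_subset [Finite V] [Fintype E] {B B' : Set E} (h : B ⊆ B') :
    G.numComponentsEdges B ≤ G.numComponentsEdges B' + (B' \ B).ncard := by
  classical
  have h1 := G.aux_ncE_le_union B (B' \ B).toFinset
  rw [Set.coe_toFinset, Set.union_diff_cancel h] at h1
  rwa [Set.ncard_eq_toFinset_card' (B' \ B)]

lemma aux_nonempty_of_connected [Finite V] (hconn : G.Connected) : Nonempty V := by
  have h1 : 0 < G.numComponentsEdges Set.univ := by rw [hconn]; norm_num
  have h2 := (Nat.card_pos_iff.mp h1).1
  obtain ⟨q⟩ := h2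
  obtain ⟨x, -⟩ := Quot.exists_rep q
  exact ⟨x⟩

lemma aux_one_le_ncE [Finite V] [Nonempty V] (B : Set E) :
    1 ≤ G.numComponentsEdges B := by
  have : Nonempty (Quot fun u v : V => ∃ e ∈ B, G.ends e = s(u, v)) :=
    ⟨Quot.mk _ (Classical.arbitrary V)⟩
  exact Nat.card_pos

lemma aux_ncE_le_cardV [Finite V] (B : Set E) :
    G.numComponentsEdges B ≤ Nat.card V :=
  Nat.card_le_card_of_surjective (Quot.mk _) Quot.mk_surjective

/-- Monotonicity of the bond rank function for connected graphs. -/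
lemma aux_bondRank_mono [Fintype V] [Fintype E] (hconn : G.Connected)
    {B B' : Set E} (h : B ⊆ B') : G.bondRank B ≤ G.bondRank B' := by
  have hV : Nonempty V := G.aux_nonempty_of_connected hconn
  have hcc : B'ᶜ ⊆ Bᶜ := Set.compl_subset_compl.mpr h
  have h1 : G.numComponentsEdges Bᶜ ≤ G.numComponentsEdges B'ᶜ := G.aux_ncE_anti hcc
  have h2 : G.numComponentsEdges B'ᶜ ≤
      G.numComponentsEdges Bᶜ + (Bᶜ \ B'ᶜ).ncard := G.aux_ncE_le_of_subset hcc
  have h3 : (Bᶜ \ B'ᶜ) = B' \ B := by ext x; simp [Set.mem_diff]; tauto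
  rw [h3] at h2
  have h4 : (B' \ B).ncard + B.ncard = B'.ncard :=
    Set.ncard_diff_add_ncard_of_subset h (Set.toFinite B')
  have h5 : 1 ≤ G.numComponentsEdges Bᶜ := G.aux_one_le_ncE Bᶜ
  have h6 : 1 ≤ G.numComponentsEdges B'ᶜ := G.aux_one_le_ncE B'ᶜ
  have h7 : G.numComponentsEdges Bᶜ ≤ Nat.card V := G.aux_ncE_le_cardV Bᶜ
  have h8 : G.numComponentsEdges B'ᶜ ≤ Nat.card V := G.aux_ncE_le_cardV B'ᶜ
  have h9 : 1 ≤ Nat.card V := Nat.card_pos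
  simp only [bondRank, cycleRank, hconn]
  omega

lemma aux_bondRank_singleton [Fintype V] [Fintype E] (h2 : G.TwoEdgeConnected)
    (e : E) : G.bondRank {e} = 1 := by
  have hV : Nonempty V := G.aux_nonempty_of_connected h2.1
  have h9 : 1 ≤ Nat.card V := Nat.card_pos
  have ha : G.numComponentsEdges ({e} : Set E)ᶜ = 1 := h2.2 e
  have hb : G.numComponentsEdges Set.univ = 1 := h2.1
  simp only [bondRank, cycleRank, ha, hb, Set.ncard_singleton]
  omega

lemma aux_exists_incident [Fintype E] (h3 : G.Trivalent) (v : V) :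
    ∃ e, v ∈ G.ends e := by
  classical
  by_contra h
  push_neg at h
  have hd := h3 v
  rw [degree] at hd
  rw [Finset.sum_eq_zero] at hd
  · exact absurd hd (by norm_num)
  · intro e _
    have h1 : G.ends e ≠ s(v, v) := by
      intro he
      exact h e (he ▸ Sym2.mem_mk_left v v)
    rw [if_neg h1, if_neg (h e)]

lemma aux_inc_mono {A A' : Set V} (h : A ⊆ A') : G.inc A ⊆ G.inc A' :=
  fun _ ⟨v, hv, hve⟩ => ⟨v, h hv, hve⟩

end Multigraph

/-- For a trivalent 2-edge-connected finite graph `G`, every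
circuit `C` of `M_G` satisfies `r*(δ(C)) = |C|`. -/
theorem bondRank_inc_circuit_eq {V E : Type*} [Fintype V] [Fintype E]
    (G : Multigraph V E) (h3 : G.Trivalent) (h2 : G.TwoEdgeConnected)
    (C : Set V) (hC : G.IsCircuitMG C) :
    G.bondRank (G.inc C) = C.ncard := by
  obtain ⟨hne, hle, hmin⟩ := hC
  refine le_antisymm hle ?_
  obtain ⟨v, hv⟩ := hne
  by_cases hns : (C \ {v}).Nonempty
  · have hss : C \ {v} ⊂ C := Set.sdiff_singleton_ssubset.mpr hv
    have ha := hmin _ hss hns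
    have hb : G.bondRank (G.inc (C \ {v})) ≤ G.bondRank (G.inc C) :=
      G.aux_bondRank_mono h2.1 (G.aux_inc_mono Set.diff_subset)
    have hc : (C \ {v}).ncard + 1 = C.ncard :=
      Set.ncard_diff_singleton_add_one hv (Set.toFinite C)
    omega
  · have hC1 : C = {v} := by
      rw [Set.not_nonempty_iff_eq_empty, Set.diff_eq_empty] at hns
      exact subset_antisymm hns (Set.singleton_subset_iff.mpr hv)
    obtain ⟨e, he⟩ := G.aux_exists_incident h3 v
    have hsub : ({e} : Set E) ⊆ G.inc C := by
      intro x hx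
      rw [Set.mem_singleton_iff] at hx
      subst hx
      exact ⟨v, hv, he⟩
    have hmono := G.aux_bondRank_mono h2.1 hsub
    rw [G.aux_bondRank_singleton h2] at hmono
    rw [hC1] at hmono
    rw [hC1, Set.ncard_singleton]
    exact hmono
end

section
/- Let G be a trivalent, 2-edge-connected finite graph and A ⊆ V(G) a subset whose induced subgraph contains a cycle. Then A is dependent in the graph curve matroid M_G. -/
section Aux

variable {V E : Type*} [Fintype V] [Fintype E] (G : Multigraph V E)

open Classical in
/-- weight of an edge with respect to a vertex set `C`. -/
noncomputable def Multigraph.wt (C : Set V) (e : E) : ℕ :=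
  ∑ v ∈ C.toFinset, (if G.ends e = s(v, v) then 2 else if v ∈ G.ends e then 1 else 0)

open Classical in
lemma Multigraph.sum_wt (h3 : G.Trivalent) (C : Set V) :
    ∑ e : E, G.wt C e = 3 * C.toFinset.card := by
  unfold Multigraph.wt
  rw [Finset.sum_comm]
  have : ∀ v ∈ C.toFinset,
      (∑ e : E, (if G.ends e = s(v, v) then 2 else if v ∈ G.ends e then 1 else 0)) = 3 := by
    intro v _
    exact h3 v
  rw [Finset.sum_congr rfl this, Finset.sum_const, smul_eq_mul, mul_comm]

open Classical in
lemma Multigraph.wt_eq_two (C : Set V) (e : E) (u v : V)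
    (he : G.ends e = s(u, v)) (hu : u ∈ C) (hv : v ∈ C) : G.wt C e = 2 := by
  unfold Multigraph.wt
  by_cases huv : u = v
  · subst huv
    have : ∀ x ∈ C.toFinset,
        (if G.ends e = s(x, x) then 2 else if x ∈ G.ends e then 1 else 0)
        = if x = u then 2 else 0 := by
      intro x _
      rw [he]
      by_cases hx : x = u
      · subst hx; simp
      · rw [if_neg (by simp [Sym2.eq_iff]; tauto), if_neg hx,
          if_neg (by simp [Sym2.mem_iff]; tauto)]
    rw [Finset.sum_congr rfl this, Finset.sum_ite_eq' C.toFinset u (fun _ => 2),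
      if_pos (Set.mem_toFinset.2 hu)]
  · have : ∀ x ∈ C.toFinset,
        (if G.ends e = s(x, x) then 2 else if x ∈ G.ends e then 1 else 0)
        = if x ∈ ({u, v} : Finset V) then 1 else 0 := by
      intro x _
      rw [he, if_neg (by simp [Sym2.eq_iff]; intro h1 h2; exact huv (h1.trans h2.symm))]
      simp [Sym2.mem_iff]
    rw [Finset.sum_congr rfl this, Finset.sum_ite_mem,
      Finset.inter_eq_right.2 (by intro x hx; simp at hx; rcases hx with h|h <;>
        simp [h, Set.mem_toFinset, hu, hv]), Finset.sum_const]
    simp [Finset.card_insert_of_notMem, huv]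

open Classical in
lemma Multigraph.one_le_wt (C : Set V) (e : E) (he : e ∈ G.inc C) : 1 ≤ G.wt C e := by
  obtain ⟨v, hvC, hve⟩ := he
  unfold Multigraph.wt
  calc (1:ℕ) ≤ (if G.ends e = s(v, v) then 2 else if v ∈ G.ends e then 1 else 0) := by
        split_ifs <;> omega
  _ ≤ _ := Finset.single_le_sum (f := fun x =>
      (if G.ends e = s(x, x) then 2 else if x ∈ G.ends e then 1 else 0))
      (fun _ _ => Nat.zero_le _) (Set.mem_toFinset.2 hvC)

lemma ncard_le_card_quot {r : V → V → Prop} (g : V → V)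
    (hg : ∀ u v, r u v → g u = g v) (S : Set V) (hS : ∀ s ∈ S, g s = s) :
    S.ncard ≤ Nat.card (Quot r) := by
  have hinj : Function.Injective (fun s : S => Quot.mk r s.1) := by
    intro a b h
    have h2 := congrArg (Quot.lift g hg) h
    simp only [Quot.lift_mk] at h2
    rw [hS a.1 a.2, hS b.1 b.2] at h2
    exact Subtype.ext h2
  calc S.ncard = Nat.card S := (Nat.card_coe_set_eq S).symm
  _ ≤ Nat.card (Quot r) := Nat.card_le_card_of_injective _ hinj

end Aux

section Main

variable {V E : Type*} [Fintype V] [Fintype E] (G : Multigraph V E)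

open Classical in
lemma Multigraph.cycle_bondRank (h3 : G.Trivalent) (h2 : G.TwoEdgeConnected)
    {C : Set V} (hC : G.IsCycleSet C) : G.bondRank (G.inc C) ≤ C.ncard := by
  obtain ⟨n, hn, f, hf, hfr, ce, hce, hcee⟩ := hC
  haveI : NeZero n := ⟨hn.ne'⟩
  have hCcard : C.ncard = n := by
    rw [← hfr, ← Nat.card_coe_set_eq, Nat.card_range_of_injective hf, Nat.card_zmod]
  have hCfin : C.toFinset.card = n := by
    rw [← Set.ncard_eq_toFinset_card', hCcard]
  set B := G.inc C with hB
  set Bf := B.toFinset with hBf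
  have hBcard : B.ncard = Bf.card := Set.ncard_eq_toFinset_card' B
  set Rf : Finset E := Finset.image ce Finset.univ with hRf
  have hRcard : Rf.card = n := by
    rw [hRf, Finset.card_image_of_injective _ hce, Finset.card_univ, ZMod.card]
  have hRsub : Rf ⊆ Bf := by
    intro x hx
    rw [hRf] at hx
    obtain ⟨i, _, rfl⟩ := Finset.mem_image.1 hx
    refine Set.mem_toFinset.2 ⟨f i, ?_, ?_⟩
    · rw [← hfr]; exact Set.mem_range_self i
    · rw [hcee i]; exact Sym2.mem_mk_left _ _
  have hwR : ∀ x ∈ Rf, G.wt C x = 2 := by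
    intro x hx
    obtain ⟨i, _, rfl⟩ := Finset.mem_image.1 hx
    exact G.wt_eq_two C _ (f i) (f (i+1)) (hcee i)
      (hfr ▸ Set.mem_range_self i) (hfr ▸ Set.mem_range_self (i+1))
  have hsum : ∑ x : E, G.wt C x = 3 * n := by rw [G.sum_wt h3, hCfin]
  have hsumB : ∑ x ∈ Bf, G.wt C x ≤ 3 * n := by
    rw [← hsum]; exact Finset.sum_le_sum_of_subset (Finset.subset_univ _)
  have hsdiff : ∑ x ∈ Bf \ Rf, G.wt C x + ∑ x ∈ Rf, G.wt C x = ∑ x ∈ Bf, G.wt C x :=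
    Finset.sum_sdiff hRsub
  have hsumR : ∑ x ∈ Rf, G.wt C x = 2 * n := by
    rw [Finset.sum_congr rfl hwR, Finset.sum_const, hRcard, smul_eq_mul, mul_comm]
  have hlow : (Bf \ Rf).card ≤ ∑ x ∈ Bf \ Rf, G.wt C x := by
    have h4 := Finset.card_nsmul_le_sum (Bf \ Rf) (G.wt C) 1
      (fun x hx => G.one_le_wt C x (Set.mem_toFinset.1 (Finset.mem_sdiff.1 hx).1))
    simpa using h4
  have hcardsd : (Bf \ Rf).card = Bf.card - n := by rw [Finset.card_sdiff_of_subset hRsub, hRcard]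
  have key : Bf.card ≤ 2 * n := by
    have : n ≤ Bf.card := hRcard ▸ Finset.card_le_card hRsub
    omega
  -- components
  have hnoC : ∀ u v : V, (∃ x ∈ Bᶜ, G.ends x = s(u, v)) → u ∉ C ∧ v ∉ C := by
    rintro u v ⟨x, hx, hxe⟩
    constructor <;> intro hmem <;> exact hx ⟨_, hmem, by rw [hxe]; simp⟩
  have hωU : G.numComponentsEdges Set.univ = 1 := h2.1
  have hexrep : ∀ z : Sym2 V, ∃ u v, z = s(u, v) :=
    fun z => Sym2.ind (fun u v => ⟨u, v, rfl⟩) z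
  rw [hCcard]
  show B.ncard + G.cycleRank Bᶜ - G.cycleRank Set.univ ≤ n
  unfold Multigraph.cycleRank
  rw [hωU]
  by_cases hCV : C = Set.univ
  · -- C is everything
    have hr : ∀ u v : V, ¬ (∃ x ∈ Bᶜ, G.ends x = s(u, v)) := by
      intro u v h
      exact (hnoC u v h).1 (by rw [hCV]; trivial)
    have hω1 : Nat.card V ≤ G.numComponentsEdges Bᶜ := by
      have := ncard_le_card_quot (r := fun u v : V => ∃ x ∈ Bᶜ, G.ends x = s(u, v))
        id (fun u v h => absurd h (hr u v)) Set.univ (fun s _ => rfl)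
      rwa [Set.ncard_univ] at this
    have hNV : Nat.card V = n := by rw [← Set.ncard_univ, ← hCV, hCcard]
    have hwall : ∀ x ∈ (Finset.univ : Finset E), G.wt C x = 2 := by
      intro x _
      obtain ⟨u, v, huv⟩ := hexrep (G.ends x)
      exact G.wt_eq_two C x u v huv (by rw [hCV]; trivial) (by rw [hCV]; trivial)
    have hE2 : 2 * Fintype.card E = 3 * n := by
      rw [← hsum, Finset.sum_congr rfl hwall, Finset.sum_const, Finset.card_univ,
        smul_eq_mul, mul_comm]
    have hBle : Bf.card ≤ Fintype.card E := Finset.card_le_univ Bf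
    omega
  · -- there is a vertex outside C
    obtain ⟨w₀, hw₀⟩ : ∃ w, w ∉ C := by
      by_contra h; push_neg at h; exact hCV (Set.eq_univ_of_forall h)
    have hω1 : n + 1 ≤ G.numComponentsEdges Bᶜ := by
      have := ncard_le_card_quot (r := fun u v : V => ∃ x ∈ Bᶜ, G.ends x = s(u, v))
        (fun v => if v ∈ C then v else w₀)
        (by intro u v h
            obtain ⟨h1, h2⟩ := hnoC u v h
            simp [h1, h2])
        (insert w₀ C)
        (by intro s hs
            rcases Set.mem_insert_iff.1 hs with rfl | hsC
            · simp [hw₀]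
            · simp [hsC])
      rwa [Set.ncard_insert_of_notMem hw₀ C.toFinite, hCcard] at this
    have hNV : n + 1 ≤ Nat.card V := by
      have h1 : (insert w₀ C).ncard ≤ (Set.univ : Set V).ncard :=
        Set.ncard_le_ncard (Set.subset_univ _) Set.finite_univ
      rwa [Set.ncard_insert_of_notMem hw₀ C.toFinite, hCcard, Set.ncard_univ] at h1
    omega

end Main

/-- For a trivalent 2-edge-connected finite graph `G`, any
vertex set whose induced subgraph contains a cycle is dependent in `M_G`. -/
theorem cyclic_depMG {V E : Type*} [Fintype V] [Fintype E]
    (G : Multigraph V E) (h3 : G.Trivalent) (h2 : G.TwoEdgeConnected)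
    (A : Set V) (hA : G.Cyclic A) :
    G.DepMG A := by
  classical
  obtain ⟨C, hCA, hC⟩ := hA
  have hkey : G.bondRank (G.inc C) ≤ C.ncard := G.cycle_bondRank h3 h2 hC
  have hCne : C.Nonempty := by
    obtain ⟨n, hn, f, hf, hfr, _⟩ := hC
    haveI : NeZero n := ⟨hn.ne'⟩
    exact ⟨f 0, hfr ▸ Set.mem_range_self 0⟩
  set P : ℕ → Prop := fun m => ∃ D ⊆ C, D.Nonempty ∧ G.bondRank (G.inc D) ≤ D.ncard ∧ D.ncard = m
    with hPdef
  have hEx : ∃ m, P m := ⟨C.ncard, C, subset_rfl, hCne, hkey, rfl⟩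
  obtain ⟨D, hDC, hDne, hDr, hDm⟩ := Nat.find_spec hEx
  refine ⟨D, hDC.trans hCA, hDne, hDr, ?_⟩
  intro A' hA' hA'ne
  by_contra hcon
  push_neg at hcon
  have hlt : A'.ncard < D.ncard := Set.ncard_lt_ncard hA' (Set.toFinite D)
  have hP' : P A'.ncard := ⟨A', hA'.subset.trans hDC, hA'ne, hcon, rfl⟩
  have hle : Nat.find hEx ≤ A'.ncard := Nat.find_le hP'
  omega
end

section
/- Let G be a trivalent, 2-edge-connected finite graph and A ⊆ V(G) acyclic. Then A is dependent in M_G if and only if A contains a nonempty subset A' with ω(A') < ω(V−A'), where ω denotes the number of connected components of the induced subgraph. Moreover, if A is a circuit of M_G, then ω(A) + 1 = ω(V−A). -/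
open Relation
set_option linter.unusedSectionVars false

section AbstractQuot
variable {α : Type*} [Finite α]


lemma GC.card_quot_le_of_imp {r r' : α → α → Prop} (h : ∀ a b, r a b → r' a b) :
    Nat.card (Quot r') ≤ Nat.card (Quot r) := by
  refine Nat.card_le_card_of_surjective
    (Quot.lift (Quot.mk r') (fun a b hab => Quot.sound (h _ _ hab))) ?_
  intro x
  induction x using Quot.ind with
  | _ a => exact ⟨Quot.mk r a, rfl⟩

lemma GC.sym2_exists_eq {β : Type*} (z : Sym2 β) : ∃ x y, z = s(x, y) :=
  Sym2.ind (fun x y => ⟨x, y, rfl⟩) z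

/-- the relation `r` with an extra (symmetrized) pair `u ~ v` added. -/
def GC.addPair (r : α → α → Prop) (u v : α) : α → α → Prop :=
  fun a b => r a b ∨ (a = u ∧ b = v) ∨ (a = v ∧ b = u)

lemma GC.eqvGen_addPair {r : α → α → Prop} {u v a b : α}
    (h : EqvGen (GC.addPair r u v) a b) :
    EqvGen r a b ∨ (EqvGen r a u ∧ EqvGen r v b) ∨ (EqvGen r a v ∧ EqvGen r u b) := by
  induction h with
  | rel x y hxy =>
    rcases hxy with h | ⟨rfl, rfl⟩ | ⟨rfl, rfl⟩
    · exact Or.inl (EqvGen.rel _ _ h)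
    · exact Or.inr (Or.inl ⟨EqvGen.refl _, EqvGen.refl _⟩)
    · exact Or.inr (Or.inr ⟨EqvGen.refl _, EqvGen.refl _⟩)
  | refl x => exact Or.inl (EqvGen.refl _)
  | symm x y _ ih =>
    rcases ih with h | ⟨h1, h2⟩ | ⟨h1, h2⟩
    · exact Or.inl (EqvGen.symm _ _ h)
    · exact Or.inr (Or.inr ⟨EqvGen.symm _ _ h2, EqvGen.symm _ _ h1⟩)
    · exact Or.inr (Or.inl ⟨EqvGen.symm _ _ h2, EqvGen.symm _ _ h1⟩)
  | trans x y z _ _ ih1 ih2 =>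
    have T : ∀ {a b c : α}, EqvGen r a b → EqvGen r b c → EqvGen r a c :=
      fun h1 h2 => EqvGen.trans _ _ _ h1 h2
    have S : ∀ {a b : α}, EqvGen r a b → EqvGen r b a := fun h => EqvGen.symm _ _ h
    rcases ih1 with h | ⟨h1, h2⟩ | ⟨h1, h2⟩ <;> rcases ih2 with g | ⟨g1, g2⟩ | ⟨g1, g2⟩
    · exact Or.inl (T h g)
    · exact Or.inr (Or.inl ⟨T h g1, g2⟩)
    · exact Or.inr (Or.inr ⟨T h g1, g2⟩)
    · exact Or.inr (Or.inl ⟨h1, T h2 g⟩)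
    · exact Or.inl (T h1 (T (S (T h2 g1)) g2))
    · exact Or.inl (T h1 g2)
    · exact Or.inr (Or.inr ⟨h1, T h2 g⟩)
    · exact Or.inl (T h1 g2)
    · exact Or.inl (T h1 (T (S (T h2 g1)) g2))
/-- Adding one pair decreases the number of classes by at most one. -/
lemma GC.card_le_card_addPair_add_one (r : α → α → Prop) (u v : α) :
    Nat.card (Quot r) ≤ Nat.card (Quot (GC.addPair r u v)) + 1 := by
  classical
  set r' := GC.addPair r u v with hr'
  have hresp : ∀ a b : α, r a b →
      (if Quot.mk r a = Quot.mk r u then (none : Option (Quot r'))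
        else some (Quot.mk r' a)) =
      (if Quot.mk r b = Quot.mk r u then (none : Option (Quot r'))
        else some (Quot.mk r' b)) := by
    intro a b hab
    have h1 : Quot.mk r a = Quot.mk r b := Quot.sound hab
    rw [h1]
    by_cases h : Quot.mk r b = Quot.mk r u
    · simp [h]
    · simp only [h, if_false]
      exact congrArg _ (Quot.sound (Or.inl hab))
  let f : Quot r → Option (Quot r') := Quot.lift _ hresp
  have hinj : Function.Injective f := by
    intro x y
    induction x using Quot.ind with | _ a =>
    induction y using Quot.ind with | _ b =>
    intro hfab
    by_cases ha : Quot.mk r a = Quot.mk r u <;> by_cases hb : Quot.mk r b = Quot.mk r u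
    · rw [ha, hb]
    · rw [show f (Quot.mk r a) = (if Quot.mk r a = Quot.mk r u then (none : Option (Quot r'))
        else some (Quot.mk r' a)) from rfl,
        show f (Quot.mk r b) = (if Quot.mk r b = Quot.mk r u then (none : Option (Quot r'))
        else some (Quot.mk r' b)) from rfl, if_pos ha, if_neg hb] at hfab
      exact absurd hfab (by simp)
    · rw [show f (Quot.mk r a) = (if Quot.mk r a = Quot.mk r u then (none : Option (Quot r'))
        else some (Quot.mk r' a)) from rfl,
        show f (Quot.mk r b) = (if Quot.mk r b = Quot.mk r u then (none : Option (Quot r'))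
        else some (Quot.mk r' b)) from rfl, if_neg ha, if_pos hb] at hfab
      exact absurd hfab (by simp)
    · simp only [f, Quot.lift, ha, hb, if_false, Option.some_inj] at hfab
      have := GC.eqvGen_addPair (Quot.eq.1 hfab)
      rcases this with h | ⟨h1, _⟩ | ⟨_, h2⟩
      · exact Quot.eq.2 h
      · exact absurd (Quot.eq.2 h1) ha
      · exact absurd (Quot.eq.2 (EqvGen.symm _ _ h2)) hb
  haveI := Fintype.ofFinite (Quot r')
  haveI : Finite (Option (Quot r')) := Finite.of_fintype _
  calc Nat.card (Quot r) ≤ Nat.card (Option (Quot r')) := Nat.card_le_card_of_injective f hinj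
    _ = Nat.card (Quot r') + 1 := Finite.card_option

/-- Adding a pair between non-equivalent elements strictly decreases the class count. -/
lemma GC.card_addPair_add_one_le (r : α → α → Prop) {u v : α} (huv : ¬ EqvGen r u v) :
    Nat.card (Quot (GC.addPair r u v)) + 1 ≤ Nat.card (Quot r) := by
  classical
  set r' := GC.addPair r u v with hr'
  have hresp : ∀ a b : α, r' a b →
      (if EqvGen r a u then Quot.mk r v else Quot.mk r a) =
      (if EqvGen r b u then Quot.mk r v else Quot.mk r b) := by
    intro a b hab
    rcases hab with hab | ⟨rfl, rfl⟩ | ⟨rfl, rfl⟩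
    · by_cases h : EqvGen r a u
      · rw [if_pos h, if_pos (EqvGen.trans _ _ _ (EqvGen.symm _ _ (EqvGen.rel _ _ hab)) h)]
      · rw [if_neg h, if_neg (fun hb => h (EqvGen.trans _ _ _ (EqvGen.rel _ _ hab) hb)),
          Quot.eq.2 (EqvGen.rel _ _ hab)]
    · rw [if_pos (EqvGen.refl _), if_neg (fun h => huv (EqvGen.symm _ _ h))]
    · rw [if_neg (fun h => huv (EqvGen.symm _ _ h)), if_pos (EqvGen.refl _)]
  let g : Quot r' → Quot r := Quot.lift _ hresp
  have hne : ∀ x : Quot r', g x ≠ Quot.mk r u := by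
    intro x
    induction x using Quot.ind with | _ a =>
    by_cases h : EqvGen r a u
    · simp only [g, Quot.lift, if_pos h]
      intro hc
      exact huv (EqvGen.symm _ _ (Quot.eq.1 hc))
    · simp only [g, Quot.lift, if_neg h]
      intro hc
      exact h (Quot.eq.1 hc)
  have hinj : Function.Injective g := by
    intro x y
    induction x using Quot.ind with | _ a =>
    induction y using Quot.ind with | _ b =>
    intro hg
    by_cases ha : EqvGen r a u <;> by_cases hb : EqvGen r b u
    · exact Quot.eq.2 (Relation.EqvGen.mono (fun a b h => Or.inl h) _ _
        (EqvGen.trans _ _ _ ha (EqvGen.symm _ _ hb)))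
    · simp only [g, Quot.lift, if_pos ha, if_neg hb] at hg
      -- v ~ b in r; then a ~' u ~' v ~' b
      have hvb : EqvGen r v b := Quot.eq.1 hg
      refine Quot.eq.2 ?_
      have h1 : EqvGen r' a u := Relation.EqvGen.mono (fun a b h => Or.inl h) _ _ ha
      have h2 : EqvGen r' u v := EqvGen.rel _ _ (Or.inr (Or.inl ⟨rfl, rfl⟩))
      have h3 : EqvGen r' v b := Relation.EqvGen.mono (fun a b h => Or.inl h) _ _ hvb
      exact EqvGen.trans _ _ _ h1 (EqvGen.trans _ _ _ h2 h3)
    · simp only [g, Quot.lift, if_pos hb, if_neg ha] at hg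
      have hvb : EqvGen r a v := Quot.eq.1 hg
      refine Quot.eq.2 ?_
      have h1 : EqvGen r' a v := Relation.EqvGen.mono (fun a b h => Or.inl h) _ _ hvb
      have h2 : EqvGen r' v u := EqvGen.rel _ _ (Or.inr (Or.inr ⟨rfl, rfl⟩))
      have h3 : EqvGen r' u b := Relation.EqvGen.mono (fun a b h => Or.inl h) _ _
        (EqvGen.symm _ _ hb)
      exact EqvGen.trans _ _ _ h1 (EqvGen.trans _ _ _ h2 h3)
    · simp only [g, Quot.lift, if_neg ha, if_neg hb] at hg
      exact Quot.eq.2 (Relation.EqvGen.mono (fun a b h => Or.inl h) _ _ (Quot.eq.1 hg))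
  -- now inject into the subtype avoiding the class of u
  let g' : Quot r' → {x : Quot r // x ≠ Quot.mk r u} := fun x => ⟨g x, hne x⟩
  have hinj' : Function.Injective g' := fun x y h => hinj (congrArg Subtype.val h)
  have h1 : Nat.card (Quot r') ≤ Nat.card {x : Quot r // x ≠ Quot.mk r u} :=
    Nat.card_le_card_of_injective g' hinj'
  have h2 : Nat.card {x : Quot r // x ≠ Quot.mk r u} + 1 = Nat.card (Quot r) := by
    haveI := Fintype.ofFinite (Quot r)
    rw [← Finite.card_option]
    exact Nat.card_congr (Equiv.optionSubtypeNe (Quot.mk r u))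
  omega
end AbstractQuot


namespace Multigraph
open Relation

variable {V E : Type*} [Fintype V] [Fintype E] (G : Multigraph V E)

/-- The adjacency relation on `V` given by the edges in `B`. -/
def erel (B : Set E) : V → V → Prop := fun u v => ∃ e ∈ B, G.ends e = s(u, v)

lemma numComponentsEdges_def (B : Set E) :
    G.numComponentsEdges B = Nat.card (Quot (G.erel B)) := rfl

lemma numComponentsEdges_le_of_subset {B B' : Set E} (h : B ⊆ B') :
    G.numComponentsEdges B' ≤ G.numComponentsEdges B := by
  rw [numComponentsEdges_def, numComponentsEdges_def]
  exact GC.card_quot_le_of_imp (fun a b ⟨e, he, hend⟩ => ⟨e, h he, hend⟩)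

lemma erel_insert_iff {B : Set E} {e : E} {u v : V} (hend : G.ends e = s(u, v)) :
    ∀ a b, G.erel (insert e B) a b ↔ GC.addPair (G.erel B) u v a b := by
  intro a b
  constructor
  · rintro ⟨f, hf, hfe⟩
    rcases hf with rfl | hf
    · rw [hend] at hfe
      rcases Sym2.eq_iff.1 hfe with ⟨rfl, rfl⟩ | ⟨rfl, rfl⟩
      · exact Or.inr (Or.inl ⟨rfl, rfl⟩)
      · exact Or.inr (Or.inr ⟨rfl, rfl⟩)
    · exact Or.inl ⟨f, hf, hfe⟩
  · rintro (⟨f, hf, hfe⟩ | ⟨rfl, rfl⟩ | ⟨rfl, rfl⟩)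
    · exact ⟨f, Set.mem_insert_of_mem _ hf, hfe⟩
    · exact ⟨e, Set.mem_insert _ _, hend⟩
    · exact ⟨e, Set.mem_insert _ _, hend.trans Sym2.eq_swap⟩

lemma numComponentsEdges_insert_ge {B : Set E} {e : E} :
    G.numComponentsEdges B ≤ G.numComponentsEdges (insert e B) + 1 := by
  obtain ⟨u, v, hend⟩ := GC.sym2_exists_eq (G.ends e)
  rw [numComponentsEdges_def, numComponentsEdges_def,
    Nat.card_congr (Quot.congrRight (G.erel_insert_iff hend))]
  exact GC.card_le_card_addPair_add_one _ u v

lemma numComponentsEdges_insert_lt {B : Set E} {e : E} {u v : V}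
    (hend : G.ends e = s(u, v)) (huv : ¬ EqvGen (G.erel B) u v) :
    G.numComponentsEdges (insert e B) + 1 ≤ G.numComponentsEdges B := by
  rw [numComponentsEdges_def, numComponentsEdges_def,
    Nat.card_congr (Quot.congrRight (G.erel_insert_iff hend))]
  exact GC.card_addPair_add_one_le _ huv

lemma numComponentsEdges_empty : G.numComponentsEdges (∅ : Set E) = Nat.card V := by
  rw [numComponentsEdges_def]
  refine Nat.card_congr ⟨Quot.lift id (fun a b ⟨e, he, _⟩ => absurd he (Set.notMem_empty e)),
    Quot.mk _, ?_, fun a => rfl⟩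
  intro x
  induction x using Quot.ind with | _ a => rfl

lemma numComponentsEdges_union_finset_ge (B : Set E) (F : Finset E) :
    G.numComponentsEdges B ≤ G.numComponentsEdges (B ∪ ↑F) + F.card := by
  classical
  induction F using Finset.induction with
  | empty => simpa using G.numComponentsEdges_le_of_subset (Set.subset_union_left)
  | insert f F' hnotmem ih =>
    have h1 : (B ∪ ↑(insert f F') : Set E) = insert f (B ∪ ↑F') := by
      ext x
      simp only [Set.mem_union, Finset.coe_insert, Set.mem_insert_iff, Finset.mem_coe]
      tauto
    calc G.numComponentsEdges B ≤ G.numComponentsEdges (B ∪ ↑F') + F'.card := ih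
      _ ≤ (G.numComponentsEdges (insert f (B ∪ ↑F')) + 1) + F'.card :=
          Nat.add_le_add_right G.numComponentsEdges_insert_ge _
      _ = G.numComponentsEdges (B ∪ ↑(insert f F')) + (F'.card + 1) := by rw [h1]; ring
      _ = G.numComponentsEdges (B ∪ ↑(insert f F')) + (insert f F').card := by
          rw [Finset.card_insert_of_notMem hnotmem]

end Multigraph

namespace Multigraph
open Relation

variable {V E : Type*} [Fintype V] [Fintype E] (G : Multigraph V E)

/-- The set of edges with both endpoints in `S`. -/
def bin (S : Set V) : Set E := {e | ∃ u ∈ S, ∃ w ∈ S, G.ends e = s(u, w)}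

/-- The adjacency relation of the induced subgraph on `S`. -/
def srel (S : Set V) : S → S → Prop := fun x y => ∃ e, G.ends e = s(x.1, y.1)

lemma numComponentsSub_def (S : Set V) :
    G.numComponentsSub S = Nat.card (Quot (G.srel S)) := rfl

lemma erel_bin_mem {S : Set V} {u v : V} (h : G.erel (G.bin S) u v) : u ∈ S ∧ v ∈ S := by
  obtain ⟨e, ⟨a, ha, b, hb, hab⟩, hend⟩ := h
  rw [hab] at hend
  rcases Sym2.eq_iff.1 hend with ⟨rfl, rfl⟩ | ⟨rfl, rfl⟩
  · exact ⟨ha, hb⟩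
  · exact ⟨hb, ha⟩

lemma compl_inc (A : Set V) : (G.inc A)ᶜ = G.bin Aᶜ := by
  ext e
  obtain ⟨x, y, hxy⟩ := GC.sym2_exists_eq (G.ends e)
  simp only [Set.mem_compl_iff, inc, Set.mem_setOf_eq, bin, hxy, Sym2.mem_iff]
  constructor
  · intro h
    refine ⟨x, fun hx => h ⟨x, hx, Or.inl rfl⟩, y, fun hy => h ⟨y, hy, Or.inr rfl⟩, rfl⟩
  · rintro ⟨u, hu, w, hw, hend⟩ ⟨v, hv, hmem⟩
    rcases Sym2.eq_iff.1 hend with ⟨rfl, rfl⟩ | ⟨rfl, rfl⟩ <;>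
      rcases hmem with rfl | rfl <;> tauto

/-- Decomposition: components of the spanning subgraph with edges inside `S` are the
components of the induced subgraph on `S` plus isolated vertices outside `S`. -/
lemma numComponentsEdges_bin (S : Set V) :
    G.numComponentsEdges (G.bin S) = G.numComponentsSub S + Sᶜ.ncard := by
  classical
  rw [numComponentsEdges_def, numComponentsSub_def]
  have hresp : ∀ a b : V, G.erel (G.bin S) a b →
      (if h : a ∈ S then (Sum.inl (Quot.mk (G.srel S) ⟨a, h⟩) : Quot (G.srel S) ⊕ ↥(Sᶜ))
        else Sum.inr ⟨a, h⟩) =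
      (if h : b ∈ S then (Sum.inl (Quot.mk (G.srel S) ⟨b, h⟩) : Quot (G.srel S) ⊕ ↥(Sᶜ))
        else Sum.inr ⟨b, h⟩) := by
    intro a b hab
    obtain ⟨ha, hb⟩ := G.erel_bin_mem hab
    rw [dif_pos ha, dif_pos hb]
    refine congrArg _ (Quot.sound ?_)
    obtain ⟨e, _, hend⟩ := hab
    exact ⟨e, hend⟩
  let F : Quot (G.erel (G.bin S)) → Quot (G.srel S) ⊕ ↥(Sᶜ) := Quot.lift _ hresp
  have hrespb : ∀ x y : ↥S, G.srel S x y →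
      Quot.mk (G.erel (G.bin S)) x.1 = Quot.mk (G.erel (G.bin S)) y.1 := by
    rintro x y ⟨e, hend⟩
    exact Quot.sound ⟨e, ⟨x.1, x.2, y.1, y.2, hend⟩, hend⟩
  let B : Quot (G.srel S) ⊕ ↥(Sᶜ) → Quot (G.erel (G.bin S)) :=
    Sum.elim (Quot.lift (fun x => Quot.mk _ x.1) hrespb) (fun w => Quot.mk _ w.1)
  have hFB : ∀ y, F (B y) = y := by
    rintro (y | w)
    · induction y using Quot.ind with | _ x =>
      show F (Quot.mk _ x.1) = _
      show (if h : x.1 ∈ S then (Sum.inl (Quot.mk (G.srel S) ⟨x.1, h⟩) : Quot (G.srel S) ⊕ ↥(Sᶜ))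
        else Sum.inr ⟨x.1, h⟩) = _
      rw [dif_pos x.2]
    · show (if h : w.1 ∈ S then (Sum.inl (Quot.mk (G.srel S) ⟨w.1, h⟩) : Quot (G.srel S) ⊕ ↥(Sᶜ))
        else Sum.inr ⟨w.1, h⟩) = _
      rw [dif_neg w.2]
  have hBF : ∀ x, B (F x) = x := by
    intro x
    induction x using Quot.ind with | _ a =>
    show B (if h : a ∈ S then (Sum.inl (Quot.mk (G.srel S) ⟨a, h⟩) : Quot (G.srel S) ⊕ ↥(Sᶜ))
        else Sum.inr ⟨a, h⟩) = _
    by_cases h : a ∈ S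
    · rw [dif_pos h]; rfl
    · rw [dif_neg h]; rfl
  rw [Nat.card_congr ⟨F, B, hBF, hFB⟩, Nat.card_sum, Nat.card_coe_set_eq]

lemma numComponentsSub_le_ncard (S : Set V) : G.numComponentsSub S ≤ S.ncard := by
  rw [numComponentsSub_def, ← Nat.card_coe_set_eq]
  exact Nat.card_le_card_of_surjective (Quot.mk _) Quot.mk_surjective

lemma numComponentsSub_pos {S : Set V} (hS : S.Nonempty) : 1 ≤ G.numComponentsSub S := by
  obtain ⟨a, ha⟩ := hS
  rw [numComponentsSub_def]
  haveI : Nonempty (Quot (G.srel S)) := ⟨Quot.mk _ ⟨a, ha⟩⟩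
  exact Nat.card_pos

end Multigraph

namespace Multigraph
open Relation

variable {V E : Type*} [Fintype V] [Fintype E] (G : Multigraph V E)

lemma erel_symm (B : Set E) : Symmetric (G.erel B) := by
  rintro u v ⟨e, he, hend⟩
  exact ⟨e, he, hend.trans Sym2.eq_swap⟩

lemma reflTransGen_of_eqvGen {B : Set E} {u v : V} (h : EqvGen (G.erel B) u v) :
    ReflTransGen (G.erel B) u v := by
  induction h with
  | rel x y hxy => exact ReflTransGen.single hxy
  | refl x => exact ReflTransGen.refl
  | symm x y _ ih => exact ReflTransGen.mono (fun a b h => G.erel_symm B h) _ _ (ReflTransGen.swap _ _ ih)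
  | trans x y z _ _ ih1 ih2 => exact ReflTransGen.trans ih1 ih2

/-- From connectivity, extract an injective (simple) path. -/
lemma exists_path {B : Set E} {A : Set V} (hB : ∀ e ∈ B, ∀ x ∈ G.ends e, x ∈ A)
    {u v : V} (hu : u ∈ A) (h : ReflTransGen (G.erel B) u v) :
    ∃ (k : ℕ) (p : Fin (k+1) → V) (q : Fin k → E), Function.Injective p ∧
      p 0 = u ∧ p (Fin.last k) = v ∧ (∀ i, p i ∈ A) ∧
      ∀ i : Fin k, q i ∈ B ∧ G.ends (q i) = s(p i.castSucc, p i.succ) := by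
  classical
  induction h with
  | refl =>
    exact ⟨0, fun _ => u, Fin.elim0, fun a b _ => Fin.ext (by omega), rfl, rfl,
      fun _ => hu, fun i => i.elim0⟩
  | tail hstep hlast ih =>
    rename_i c w
    obtain ⟨k, p, q, hp, hp0, hplast, hpA, hq⟩ := ih
    obtain ⟨e0, he0B, hend0⟩ := hlast
    have hwA : w ∈ A := hB e0 he0B w (by rw [hend0]; exact Sym2.mem_mk_right c w)
    by_cases hw : ∃ j : Fin (k+1), p j = w
    · obtain ⟨j, hj⟩ := hw
      have hj1 : j.1 + 1 ≤ k + 1 := by omega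
      have hj2 : j.1 ≤ k := by omega
      refine ⟨j.1, fun i => p (Fin.castLE hj1 i), fun i => q (Fin.castLE hj2 i),
        hp.comp (Fin.castLE_injective _), ?_, ?_, fun i => hpA _, ?_⟩
      · rw [← hp0]
        exact congrArg p (Fin.ext (by simp))
      · rw [← hj]
        exact congrArg p (Fin.ext (by simp))
      · intro i
        refine ⟨(hq (Fin.castLE hj2 i)).1, ?_⟩
        show G.ends (q (Fin.castLE hj2 i)) =
          s(p (Fin.castLE hj1 i.castSucc), p (Fin.castLE hj1 i.succ))
        have e1 : Fin.castLE hj1 i.castSucc = (Fin.castLE hj2 i).castSucc := Fin.ext (by simp)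
        have e2 : Fin.castLE hj1 i.succ = (Fin.castLE hj2 i).succ := Fin.ext (by simp)
        rw [e1, e2]
        exact (hq _).2
    · refine ⟨k+1, fun i => if h : i.1 < k+1 then p ⟨i.1, h⟩ else w,
        fun i => if h : i.1 < k then q ⟨i.1, h⟩ else e0, ?_, ?_, ?_, ?_, ?_⟩
      · intro a b hab
        simp only at hab
        by_cases ha : a.1 < k+1 <;> by_cases hb : b.1 < k+1
        · rw [dif_pos ha, dif_pos hb] at hab
          exact Fin.ext (Fin.mk_eq_mk.1 (hp hab))
        · rw [dif_pos ha, dif_neg hb] at hab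
          exact absurd ⟨_, hab⟩ hw
        · rw [dif_neg ha, dif_pos hb] at hab
          exact absurd ⟨_, hab.symm⟩ hw
        · have : a.1 = b.1 := by omega
          exact Fin.ext this
      · show (if h : (0:ℕ) < k+1 then p ⟨0, h⟩ else w) = u
        rw [dif_pos (by omega)]
        rw [← hp0]
        exact congrArg p (Fin.ext (by simp))
      · show (if h : (Fin.last (k+1)).1 < k+1 then p ⟨(Fin.last (k+1)).1, h⟩ else w) = w
        rw [dif_neg (by simp)]
      · intro i
        show (if h : i.1 < k+1 then p ⟨i.1, h⟩ else w) ∈ A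
        by_cases h : i.1 < k+1
        · rw [dif_pos h]; exact hpA _
        · rw [dif_neg h]; exact hwA
      · intro i
        refine ⟨?_, ?_⟩
        · show (if h : i.1 < k then q ⟨i.1, h⟩ else e0) ∈ B
          by_cases h : i.1 < k
          · rw [dif_pos h]; exact (hq _).1
          · rw [dif_neg h]; exact he0B
        show G.ends (if h : i.1 < k then q ⟨i.1, h⟩ else e0) =
          s(if h : (i.castSucc.1 : ℕ) < k+1 then p ⟨i.castSucc.1, h⟩ else w,
            if h : (i.succ.1 : ℕ) < k+1 then p ⟨i.succ.1, h⟩ else w)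
        by_cases h : i.1 < k
        · have hcs : (i.castSucc.1 : ℕ) < k+1 := by
            simp only [Fin.coe_castSucc]; omega
          have hsc : (i.succ.1 : ℕ) < k+1 := by
            simp only [Fin.val_succ]; omega
          rw [dif_pos h, dif_pos hcs, dif_pos hsc]
          have h1 : (⟨i.castSucc.1, hcs⟩ : Fin (k+1)) = (⟨i.1, h⟩ : Fin k).castSucc :=
            Fin.ext (by simp)
          have h2 : (⟨i.succ.1, hsc⟩ : Fin (k+1)) = (⟨i.1, h⟩ : Fin k).succ :=
            Fin.ext (by simp)
          rw [h1, h2]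
          exact (hq _).2
        · have hik : i.1 = k := by omega
          have hcs : (i.castSucc.1 : ℕ) < k+1 := by
            simp only [Fin.coe_castSucc]; omega
          have hsc : ¬ ((i.succ.1 : ℕ) < k+1) := by
            simp only [Fin.val_succ]; omega
          rw [dif_neg h, dif_pos hcs, dif_neg hsc]
          have h1 : (⟨i.castSucc.1, hcs⟩ : Fin (k+1)) = Fin.last k := by
            refine Fin.ext ?_; simp [hik]
          rw [h1, hplast]
          exact hend0
end Multigraph

namespace Multigraph
open Relation

variable {V E : Type*} [Fintype V] [Fintype E] (G : Multigraph V E)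

lemma cyclic_of_loop {A : Set V} {v : V} (hv : v ∈ A) {e : E} (h : G.ends e = s(v, v)) :
    G.Cyclic A := by
  refine ⟨{v}, Set.singleton_subset_iff.2 hv, 1, one_pos, fun _ => v,
    fun a b _ => Subsingleton.elim a b, Set.range_const, fun _ => e,
    fun a b _ => Subsingleton.elim a b, fun i => h⟩

lemma not_loop_of_acyclic {A : Set V} (hA : G.Acyclic A) {v : V} (hv : v ∈ A) (e : E) :
    G.ends e ≠ s(v, v) := fun h => hA (G.cyclic_of_loop hv h)

lemma cyclic_aux {A : Set V} {B : Set E} (k' : ℕ) (p : Fin (k'+2) → V) (q : Fin (k'+1) → E)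
    (hp : Function.Injective p) (hpA : ∀ i, p i ∈ A)
    (hq : ∀ i : Fin (k'+1), q i ∈ B ∧ G.ends (q i) = s(p i.castSucc, p i.succ))
    {e0 : E} (he0 : e0 ∉ B) (hend : G.ends e0 = s(p 0, p (Fin.last (k'+1)))) :
    G.Cyclic A := by
  classical
  haveI : Fact (1 < k'+2) := ⟨by omega⟩
  have hvallt : ∀ i : ZMod (k'+2), i.val < k'+2 := fun i => ZMod.val_lt i
  have hvalsucc : ∀ i : ZMod (k'+2), (i + 1).val = (i.val + 1) % (k'+2) := by
    intro i
    rw [ZMod.val_add, ZMod.val_one]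
  refine ⟨Set.range (fun i : ZMod (k'+2) => p ⟨i.val, hvallt i⟩),
    by rintro x ⟨i, rfl⟩; exact hpA _,
    k'+2, by omega, fun i : ZMod (k'+2) => p ⟨i.val, hvallt i⟩, ?_, rfl,
    fun i : ZMod (k'+2) => if h : i.val < k'+1 then q ⟨i.val, h⟩ else e0, ?_, ?_⟩
  · intro a b hab
    change p ⟨a.val, hvallt a⟩ = p ⟨b.val, hvallt b⟩ at hab
    exact ZMod.val_injective _ (Fin.mk_eq_mk.1 (hp hab))
  · intro a b hab
    change (if h : a.val < k'+1 then q ⟨a.val, h⟩ else e0) =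
      (if h : b.val < k'+1 then q ⟨b.val, h⟩ else e0) at hab
    by_cases ha : a.val < k'+1 <;> by_cases hb : b.val < k'+1
    · rw [dif_pos ha, dif_pos hb] at hab
      have hends := congrArg G.ends hab
      rw [(hq ⟨a.val, ha⟩).2, (hq ⟨b.val, hb⟩).2] at hends
      rcases Sym2.eq_iff.1 hends with ⟨h1, _⟩ | ⟨h1, h2⟩
      · have := Fin.mk_eq_mk.1 (hp h1)
        simp only [Fin.coe_castSucc] at this
        exact ZMod.val_injective _ this
      · have g1 := Fin.mk_eq_mk.1 (hp h1)
        have g2 := Fin.mk_eq_mk.1 (hp h2)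
        simp only [Fin.coe_castSucc, Fin.val_succ] at g1 g2
        omega
    · rw [dif_pos ha, dif_neg hb] at hab
      exact absurd (hab ▸ (hq ⟨a.val, ha⟩).1) he0
    · rw [dif_neg ha, dif_pos hb] at hab
      exact absurd (hab.symm ▸ (hq ⟨b.val, hb⟩).1) he0
    · have : a.val = b.val := by have := hvallt a; have := hvallt b; omega
      exact ZMod.val_injective _ this
  · intro i
    show G.ends (if h : i.val < k'+1 then q ⟨i.val, h⟩ else e0) =
      s(p ⟨i.val, hvallt i⟩, p ⟨(i+1).val, hvallt (i+1)⟩)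
    by_cases hi : i.val < k'+1
    · have hv1 : (i + 1).val = i.val + 1 := by rw [hvalsucc, Nat.mod_eq_of_lt (by omega)]
      rw [dif_pos hi, (hq ⟨i.val, hi⟩).2]
      have e1 : (⟨i.val, hi⟩ : Fin (k'+1)).castSucc = (⟨i.val, hvallt i⟩ : Fin (k'+2)) :=
        Fin.ext (by simp)
      have e2 : (⟨i.val, hi⟩ : Fin (k'+1)).succ = (⟨(i+1).val, hvallt (i+1)⟩ : Fin (k'+2)) :=
        Fin.ext (by simp [hv1])
      rw [e1, e2]
    · have hik : i.val = k'+1 := by have := hvallt i; omega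
      have hv1 : (i + 1).val = 0 := by rw [hvalsucc, hik, show k'+1+1 = k'+2 from rfl, Nat.mod_self]
      rw [dif_neg hi, hend]
      have e1 : (⟨i.val, hvallt i⟩ : Fin (k'+2)) = Fin.last (k'+1) := Fin.ext (by simp [hik])
      have e2 : (⟨(i+1).val, hvallt (i+1)⟩ : Fin (k'+2)) = 0 := Fin.ext (by simp [hv1])
      rw [e1, e2]
      exact Sym2.eq_swap

/-- If two vertices are connected by edges of `B` (all inside `A`) and also joined by an
edge outside `B`, then `A` contains a cycle. -/
lemma cyclic_of_eqvGen {B : Set E} {A : Set V} (hB : ∀ e ∈ B, ∀ x ∈ G.ends e, x ∈ A)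
    {u v : V} (hu : u ∈ A) (hconn : EqvGen (G.erel B) u v)
    {e0 : E} (he0 : e0 ∉ B) (hend : G.ends e0 = s(u, v)) : G.Cyclic A := by
  obtain ⟨k, p, q, hp, hp0, hplast, hpA, hq⟩ :=
    G.exists_path hB hu (G.reflTransGen_of_eqvGen hconn)
  match k, p, q, hp, hp0, hplast, hpA, hq with
  | 0, p, q, hp, hp0, hplast, hpA, hq =>
    have huv : u = v := by rw [← hp0, ← hplast]; rfl
    exact G.cyclic_of_loop hu (by rw [hend, ← huv])
  | (k'+1), p, q, hp, hp0, hplast, hpA, hq =>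
    exact G.cyclic_aux k' p q hp hpA hq he0 (by rw [hend, hp0, hplast])

end Multigraph

open Classical in
/-- The number of endpoints of `z` lying in `A`, counted with multiplicity. -/
noncomputable def GC.endsIn {V : Type*} (A : Set V) (z : Sym2 V) : ℕ :=
  Sym2.lift ⟨fun x y => (if x ∈ A then 1 else 0) + (if y ∈ A then 1 else 0),
    fun _ _ => by ring⟩ z

open Classical in
lemma GC.endsIn_mk {V : Type*} (A : Set V) (x y : V) :
    GC.endsIn A s(x, y) = (if x ∈ A then 1 else 0) + (if y ∈ A then 1 else 0) := by
  simp [GC.endsIn]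

lemma GC.endsIn_le_two {V : Type*} (A : Set V) (z : Sym2 V) : GC.endsIn A z ≤ 2 := by
  classical
  induction z using Sym2.ind with
  | _ x y => rw [GC.endsIn_mk]; split <;> split <;> omega

namespace Multigraph
open Relation

variable {V E : Type*} [Fintype V] [Fintype E] (G : Multigraph V E)

lemma ends_mem_of_mem_bin {S : Set V} {e : E} (he : e ∈ G.bin S) :
    ∀ x ∈ G.ends e, x ∈ S := by
  obtain ⟨u, hu, w, hw, hend⟩ := he
  intro x hx
  rw [hend, Sym2.mem_iff] at hx
  rcases hx with rfl | rfl <;> assumption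

lemma mem_bin_iff_endsIn {S : Set V} {e : E} : e ∈ G.bin S ↔ GC.endsIn S (G.ends e) = 2 := by
  classical
  obtain ⟨x, y, hxy⟩ := GC.sym2_exists_eq (G.ends e)
  rw [hxy, GC.endsIn_mk]
  constructor
  · intro he
    have hx := G.ends_mem_of_mem_bin he x (by rw [hxy]; exact Sym2.mem_mk_left x y)
    have hy := G.ends_mem_of_mem_bin he y (by rw [hxy]; exact Sym2.mem_mk_right x y)
    rw [if_pos hx, if_pos hy]
  · intro h
    have hx : x ∈ S := by by_contra hx; rw [if_neg hx] at h; split at h <;> omega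
    have hy : y ∈ S := by by_contra hy; rw [if_neg hy] at h; split at h <;> omega
    exact ⟨x, hx, y, hy, hxy⟩

lemma mem_inc_iff_endsIn {S : Set V} {e : E} : e ∈ G.inc S ↔ 1 ≤ GC.endsIn S (G.ends e) := by
  classical
  obtain ⟨x, y, hxy⟩ := GC.sym2_exists_eq (G.ends e)
  rw [hxy, GC.endsIn_mk]
  constructor
  · rintro ⟨v, hv, hmem⟩
    rw [hxy, Sym2.mem_iff] at hmem
    rcases hmem with rfl | rfl
    · rw [if_pos hv]; omega
    · rw [if_pos hv]; omega
  · intro h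
    by_cases hx : x ∈ S
    · exact ⟨x, hx, by rw [hxy]; exact Sym2.mem_mk_left x y⟩
    · by_cases hy : y ∈ S
      · exact ⟨y, hy, by rw [hxy]; exact Sym2.mem_mk_right x y⟩
      · rw [if_neg hx, if_neg hy] at h; omega

open Classical in
/-- Handshake: if no vertex of `A` carries a loop, the degree sum over `A` counts
endpoints in `A`. -/
lemma degree_sum_eq (A : Set V) (hnl : ∀ v ∈ A, ∀ e : E, G.ends e ≠ s(v, v)) :
    ∑ v ∈ A.toFinset, G.degree v = ∑ e : E, GC.endsIn A (G.ends e) := by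
  rw [show ∑ v ∈ A.toFinset, G.degree v = ∑ v ∈ A.toFinset, ∑ e : E,
      (if G.ends e = s(v, v) then 2 else if v ∈ G.ends e then 1 else 0) from
    Finset.sum_congr rfl (fun v _ => by rw [degree]),
    Finset.sum_comm]
  refine Finset.sum_congr rfl (fun e _ => ?_)
  obtain ⟨x, y, hxy⟩ := GC.sym2_exists_eq (G.ends e)
  rw [hxy]
  by_cases hd : x = y
  · subst hd
    have hxA : x ∉ A := fun hx => hnl x hx e hxy
    have hterm : ∀ v ∈ A.toFinset, (if s(x, x) = s(v, v) then 2
        else if v ∈ s(x, x) then 1 else 0) = 0 := by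
      intro v hv
      have hvx : v ≠ x := by
        rintro rfl
        exact hxA (Set.mem_toFinset.1 hv)
      rw [if_neg (fun hc => hvx (by rcases Sym2.eq_iff.1 hc with ⟨h, _⟩ | ⟨_, h⟩ <;>
        exact h.symm)), if_neg (fun hc => hvx (by rcases Sym2.mem_iff.1 hc with h | h <;>
        exact h))]
    rw [Finset.sum_congr rfl hterm, Finset.sum_const, GC.endsIn_mk, if_neg hxA]
    simp
  · have hterm : ∀ v ∈ A.toFinset, (if s(x, y) = s(v, v) then 2
        else if v ∈ s(x, y) then 1 else 0) =
        (if v = x then 1 else 0) + (if v = y then 1 else 0) := by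
      intro v _
      have hne : s(x, y) ≠ s(v, v) := by
        intro hc
        rcases Sym2.eq_iff.1 hc with ⟨h1, h2⟩ | ⟨h1, h2⟩ <;> exact hd (h1.trans h2.symm)
      rw [if_neg hne]
      by_cases hvx : v = x <;> by_cases hvy : v = y
      · exact absurd (by rw [← hvx, hvy]) hd
      all_goals simp [Sym2.mem_iff, hvx, hvy]
      · exact hd
      · exact fun h => hd h.symm
    rw [Finset.sum_congr rfl hterm, Finset.sum_add_distrib, Finset.sum_ite_eq' A.toFinset x
      (fun _ => 1), Finset.sum_ite_eq' A.toFinset y (fun _ => 1), GC.endsIn_mk]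
    simp [Set.mem_toFinset]

open Classical in
lemma sum_endsIn_eq (A : Set V) :
    ∑ e : E, GC.endsIn A (G.ends e) = (G.inc A).ncard + (G.bin A).ncard := by
  have key : ∀ e : E, GC.endsIn A (G.ends e) =
      (if e ∈ G.inc A then 1 else 0) + (if e ∈ G.bin A then 1 else 0) := by
    intro e
    have h2 := GC.endsIn_le_two A (G.ends e)
    have hinc := G.mem_inc_iff_endsIn (S := A) (e := e)
    have hbin := G.mem_bin_iff_endsIn (S := A) (e := e)
    by_cases h1 : e ∈ G.inc A <;> by_cases hb : e ∈ G.bin A <;>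
      simp only [h1, hb, if_true, if_false, iff_true, iff_false, true_iff, false_iff,
        not_le, not_lt] at hinc hbin ⊢ <;> omega
  rw [Finset.sum_congr rfl (fun e _ => key e), Finset.sum_add_distrib]
  have hc1 : (G.inc A).ncard = ∑ e : E, (if e ∈ G.inc A then 1 else 0) := by
    rw [Set.ncard_eq_toFinset_card', ← Finset.card_filter]
    congr 1
    ext e
    simp
  have hc2 : (G.bin A).ncard = ∑ e : E, (if e ∈ G.bin A then 1 else 0) := by
    rw [Set.ncard_eq_toFinset_card', ← Finset.card_filter]
    congr 1
    ext e
    simp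
  rw [hc1, hc2]

end Multigraph

namespace Multigraph
open Relation

variable {V E : Type*} [Fintype V] [Fintype E] (G : Multigraph V E)

lemma forest_bound {A : Set V} (hA : G.Acyclic A) :
    (G.bin A).ncard + G.numComponentsEdges (G.bin A) ≤ Nat.card V := by
  classical
  suffices h : ∀ B : Finset E, ↑B ⊆ G.bin A →
      B.card + G.numComponentsEdges ↑B ≤ Nat.card V by
    have := h (G.bin A).toFinset (by simp)
    rwa [Set.coe_toFinset, ← Set.ncard_eq_toFinset_card'] at this
  intro B
  induction B using Finset.induction with
  | empty =>
    intro _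
    rw [Finset.card_empty, Finset.coe_empty, numComponentsEdges_empty]
    omega
  | insert f B hf ih =>
    intro hsub
    have hBsub : (↑B : Set E) ⊆ G.bin A := fun x hx =>
      hsub (by simp only [Finset.coe_insert, Set.mem_insert_iff]; exact Or.inr hx)
    obtain ⟨u, v, hend⟩ := GC.sym2_exists_eq (G.ends f)
    have hf_bin : f ∈ G.bin A := hsub (by simp)
    have huA : u ∈ A := G.ends_mem_of_mem_bin hf_bin u
      (by rw [hend]; exact Sym2.mem_mk_left _ _)
    by_cases hconn : EqvGen (G.erel (↑B : Set E)) u v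
    · exact absurd (G.cyclic_of_eqvGen (fun e he => G.ends_mem_of_mem_bin (hBsub he))
        huA hconn (by simpa using hf) hend) hA
    · have hlt := G.numComponentsEdges_insert_lt (B := (↑B : Set E)) hend hconn
      have hih := ih hBsub
      rw [Finset.card_insert_of_notMem hf, Finset.coe_insert]
      omega

lemma card_V_le_comp (B : Set E) :
    Nat.card V ≤ G.numComponentsEdges B + B.ncard := by
  classical
  have := G.numComponentsEdges_union_finset_ge ∅ B.toFinset
  rwa [numComponentsEdges_empty, Set.empty_union, Set.coe_toFinset,
    ← Set.ncard_eq_toFinset_card'] at this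

/-- The forest edge count: an acyclic induced subgraph on `A` has `|A| - ω(A)` edges. -/
lemma bin_count {A : Set V} (hA : G.Acyclic A) :
    (G.bin A).ncard + G.numComponentsSub A = A.ncard := by
  have h1 := G.forest_bound hA
  have h2 := G.card_V_le_comp (G.bin A)
  have h3 := G.numComponentsEdges_bin A
  have h4 := Set.ncard_add_ncard_compl A
  omega

/-- Size of the edge boundary region: `|inc A| = 2|A| + ω(A)` for acyclic `A` in a
trivalent graph. -/
lemma inc_count (h3 : G.Trivalent) {A : Set V} (hA : G.Acyclic A) :
    (G.inc A).ncard + A.ncard = 3 * A.ncard + G.numComponentsSub A := by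
  classical
  have hnl : ∀ v ∈ A, ∀ e : E, G.ends e ≠ s(v, v) := fun v hv e =>
    G.not_loop_of_acyclic hA hv e
  have hdeg := G.degree_sum_eq A hnl
  have hsum := G.sum_endsIn_eq A
  have htri : ∑ v ∈ A.toFinset, G.degree v = 3 * A.ncard := by
    rw [Finset.sum_congr rfl (fun v _ => h3 v), Finset.sum_const,
      Set.ncard_eq_toFinset_card', smul_eq_mul, mul_comm]
  have hbc := G.bin_count hA
  omega

end Multigraph

namespace Multigraph
open Relation

variable {V E : Type*} [Fintype V] [Fintype E] (G : Multigraph V E)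

lemma acyclic_subset {A B : Set V} (h : B ⊆ A) (hA : G.Acyclic A) : G.Acyclic B :=
  fun ⟨C, hC, hcyc⟩ => hA ⟨C, hC.trans h, hcyc⟩

/-- **Key lemma**: for a nonempty acyclic `A`, the bond rank condition defining
dependence is equivalent to the component-count inequality. -/
lemma bondRank_le_iff (h3 : G.Trivalent) (h2 : G.TwoEdgeConnected) {A : Set V}
    (hA : G.Acyclic A) (hne : A.Nonempty) :
    G.bondRank (G.inc A) ≤ A.ncard ↔
      G.numComponentsSub A < G.numComponentsSub Aᶜ := by
  have hinc := G.inc_count h3 hA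
  have hbinc : G.numComponentsEdges (G.inc A)ᶜ =
      G.numComponentsSub Aᶜ + A.ncard := by
    rw [G.compl_inc A, G.numComponentsEdges_bin Aᶜ, compl_compl]
  have hwle := G.numComponentsSub_le_ncard Aᶜ
  have h4 := Set.ncard_add_ncard_compl A
  have ha1 : 0 < A.ncard := (Set.ncard_pos A.toFinite).2 hne
  rw [bondRank, cycleRank, cycleRank, hbinc, h2.1]
  omega

/-- The dependence criterion. -/
lemma depMG_iff (h3 : G.Trivalent) (h2 : G.TwoEdgeConnected) {A : Set V}
    (hA : G.Acyclic A) :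
    G.DepMG A ↔ ∃ A' ⊆ A, A'.Nonempty ∧
      G.numComponentsSub A' < G.numComponentsSub A'ᶜ := by
  constructor
  · rintro ⟨C, hCA, hCne, hCrank, -⟩
    exact ⟨C, hCA, hCne,
      (G.bondRank_le_iff h3 h2 (G.acyclic_subset hCA hA) hCne).1 hCrank⟩
  · rintro ⟨A', hsub, hne, hlt⟩
    have hA' : G.Acyclic A' := G.acyclic_subset hsub hA
    have hrank : G.bondRank (G.inc A') ≤ A'.ncard :=
      (G.bondRank_le_iff h3 h2 hA' hne).2 hlt
    have main : ∀ n : ℕ, ∀ B : Set V, B ⊆ A → B.Nonempty →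
        G.bondRank (G.inc B) ≤ B.ncard → B.ncard ≤ n → G.DepMG A := by
      intro n
      induction n with
      | zero =>
        intro B hBA hBne hBr hBn
        have := (Set.ncard_pos B.toFinite).2 hBne
        omega
      | succ n ih =>
        intro B hBA hBne hBr hBn
        by_cases hmin : ∀ B' : Set V, B' ⊂ B → B'.Nonempty →
            B'.ncard < G.bondRank (G.inc B')
        · exact ⟨B, hBA, hBne, hBr, hmin⟩
        · push_neg at hmin
          obtain ⟨B', hB'B, hB'ne, hB'r⟩ := hmin
          refine ih B' (hB'B.subset.trans hBA) hB'ne hB'r ?_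
          have := Set.ncard_lt_ncard hB'B B.toFinite
          omega
    exact main A'.ncard A' hsub hne hrank le_rfl

end Multigraph

namespace Multigraph
open Relation

variable {V E : Type*} [Fintype V] [Fintype E] (G : Multigraph V E)

open Classical in
lemma card_edges_at (h3 : G.Trivalent) {v : V} (hnl : ∀ e : E, G.ends e ≠ s(v, v)) :
    ({e : E | v ∈ G.ends e}).ncard = 3 := by
  have hdeg := h3 v
  rw [degree] at hdeg
  rw [Set.ncard_eq_toFinset_card', ← hdeg]
  rw [show (∑ e : E, if G.ends e = s(v, v) then 2 else if v ∈ G.ends e then 1 else 0)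
      = ∑ e : E, (if v ∈ G.ends e then 1 else 0) from
    Finset.sum_congr rfl (fun e _ => by rw [if_neg (hnl e)]), ← Finset.card_filter]
  congr 1
  ext e
  simp

open Classical in
lemma sum_inside_degrees {A : Set V} (hA : G.Acyclic A) :
    ∑ v ∈ A.toFinset, (G.bin A ∩ {e | v ∈ G.ends e}).ncard = 2 * (G.bin A).ncard := by
  have step1 : ∀ v, (G.bin A ∩ {e | v ∈ G.ends e}).ncard
      = ∑ e : E, (if e ∈ G.bin A ∧ v ∈ G.ends e then 1 else 0) := by
    intro v
    rw [Set.ncard_eq_toFinset_card', ← Finset.card_filter]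
    congr 1
    ext e
    simp [Set.mem_inter_iff]
  rw [Finset.sum_congr rfl (fun v _ => step1 v), Finset.sum_comm]
  have step2 : ∀ e : E, ∑ v ∈ A.toFinset, (if e ∈ G.bin A ∧ v ∈ G.ends e then 1 else 0)
      = if e ∈ G.bin A then 2 else 0 := by
    intro e
    by_cases he : e ∈ G.bin A
    · rw [if_pos he]
      obtain ⟨x, y, hxy⟩ := GC.sym2_exists_eq (G.ends e)
      have hx : x ∈ A := G.ends_mem_of_mem_bin he x (by rw [hxy]; exact Sym2.mem_mk_left _ _)
      have hy : y ∈ A := G.ends_mem_of_mem_bin he y (by rw [hxy]; exact Sym2.mem_mk_right _ _)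
      have hd : x ≠ y := by
        rintro rfl
        exact G.not_loop_of_acyclic hA hx e hxy
      have hterm : ∀ v ∈ A.toFinset, (if e ∈ G.bin A ∧ v ∈ G.ends e then 1 else 0)
          = (if v = x then 1 else 0) + (if v = y then 1 else 0) := by
        intro v _
        rw [hxy]
        by_cases hvx : v = x <;> by_cases hvy : v = y
        · exact absurd (by rw [← hvx, hvy]) hd
        all_goals simp [Sym2.mem_iff, hvx, hvy, he]
        · exact hd
        · exact fun h => hd h.symm
      rw [Finset.sum_congr rfl hterm, Finset.sum_add_distrib,
        Finset.sum_ite_eq' A.toFinset x (fun _ => 1),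
        Finset.sum_ite_eq' A.toFinset y (fun _ => 1),
        if_pos (Set.mem_toFinset.2 hx), if_pos (Set.mem_toFinset.2 hy)]
    · rw [if_neg he]
      refine Finset.sum_eq_zero (fun v _ => ?_)
      rw [if_neg (fun hc => he hc.1)]
  rw [Finset.sum_congr rfl (fun e _ => step2 e), ← Finset.sum_filter,
    Finset.sum_const, smul_eq_mul, mul_comm, Set.ncard_eq_toFinset_card']
  congr 2
  ext e
  simp

lemma exists_low_vertex {A : Set V} (hA : G.Acyclic A) (hne : A.Nonempty) :
    ∃ v ∈ A, (G.bin A ∩ {e | v ∈ G.ends e}).ncard ≤ 1 := by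
  classical
  by_contra hcon
  push_neg at hcon
  have hbig : ∀ v ∈ A.toFinset, 2 ≤ (G.bin A ∩ {e | v ∈ G.ends e}).ncard := by
    intro v hv
    exact hcon v (Set.mem_toFinset.1 hv)
  have hsum := Finset.card_nsmul_le_sum A.toFinset _ 2 hbig
  rw [G.sum_inside_degrees hA] at hsum
  have hcard : A.toFinset.card = A.ncard := (Set.ncard_eq_toFinset_card' A).symm
  have hbc := G.bin_count hA
  have hw := G.numComponentsSub_pos hne
  simp only [smul_eq_mul] at hsum
  omega

end Multigraph

namespace Multigraph
open Relation

variable {V E : Type*} [Fintype V] [Fintype E] (G : Multigraph V E)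

lemma bin_mono {S T : Set V} (h : S ⊆ T) : G.bin S ⊆ G.bin T := by
  rintro e ⟨u, hu, w, hw, hend⟩
  exact ⟨u, h hu, w, h hw, hend⟩

lemma bin_union_split {A : Set V} {v : V} :
    G.bin (A \ {v}) ∪ (G.bin A ∩ {e | v ∈ G.ends e}) = G.bin A := by
  apply Set.Subset.antisymm
  · exact Set.union_subset (G.bin_mono Set.diff_subset) Set.inter_subset_left
  · intro e he
    by_cases hv : v ∈ G.ends e
    · exact Or.inr ⟨he, hv⟩
    · obtain ⟨x, y, hxy⟩ := GC.sym2_exists_eq (G.ends e)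
      have hx : x ∈ A := G.ends_mem_of_mem_bin he x (by rw [hxy]; exact Sym2.mem_mk_left _ _)
      have hy : y ∈ A := G.ends_mem_of_mem_bin he y (by rw [hxy]; exact Sym2.mem_mk_right _ _)
      have hxv : x ≠ v := fun h => hv (by rw [hxy, ← h]; exact Sym2.mem_mk_left _ _)
      have hyv : y ≠ v := fun h => hv (by rw [hxy, ← h]; exact Sym2.mem_mk_right _ _)
      exact Or.inl ⟨x, ⟨hx, hxv⟩, y, ⟨hy, hyv⟩, hxy⟩

lemma numComponentsEdges_le_union (B : Set E) (F : Set E) :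
    G.numComponentsEdges B ≤ G.numComponentsEdges (B ∪ F) + F.ncard := by
  classical
  have := G.numComponentsEdges_union_finset_ge B F.toFinset
  rwa [Set.coe_toFinset, ← Set.ncard_eq_toFinset_card'] at this

lemma comp_sub_remove {A : Set V} {v : V} (hv : v ∈ A) :
    G.numComponentsSub (A \ {v}) + 1 ≤
      G.numComponentsSub A + (G.bin A ∩ {e | v ∈ G.ends e}).ncard := by
  have hkey := G.numComponentsEdges_le_union (G.bin (A \ {v}))
    (G.bin A ∩ {e | v ∈ G.ends e})
  rw [G.bin_union_split] at hkey
  rw [G.numComponentsEdges_bin, G.numComponentsEdges_bin] at hkey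
  have h1 := Set.ncard_add_ncard_compl A
  have h2 := Set.ncard_add_ncard_compl (A \ {v})
  have h3 : (A \ {v}).ncard = A.ncard - 1 := Set.ncard_diff_singleton_of_mem hv
  have h4 : 0 < A.ncard := (Set.ncard_pos A.toFinite).2 ⟨v, hv⟩
  omega

lemma comp_compl_add {A : Set V} {v : V} (hv : v ∈ A) :
    G.numComponentsSub Aᶜ + 1 ≤ G.numComponentsSub (A \ {v})ᶜ +
      ((G.bin (A \ {v})ᶜ) \ (G.bin Aᶜ)).ncard := by
  have hT : Aᶜ ⊆ (A \ {v})ᶜ := by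
    intro x hx
    simp only [Set.mem_compl_iff, Set.mem_diff] at *
    tauto
  have hsplit : G.bin Aᶜ ∪ ((G.bin (A \ {v})ᶜ) \ (G.bin Aᶜ)) = G.bin (A \ {v})ᶜ := by
    rw [Set.union_diff_self, Set.union_eq_self_of_subset_left (G.bin_mono hT)]
  have hkey := G.numComponentsEdges_le_union (G.bin Aᶜ)
    ((G.bin (A \ {v})ᶜ) \ (G.bin Aᶜ))
  rw [hsplit] at hkey
  rw [G.numComponentsEdges_bin, G.numComponentsEdges_bin, compl_compl, compl_compl] at hkey
  have h3 : (A \ {v}).ncard = A.ncard - 1 := Set.ncard_diff_singleton_of_mem hv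
  have h4 : 0 < A.ncard := (Set.ncard_pos A.toFinite).2 ⟨v, hv⟩
  omega

lemma boundary_bound (h3 : G.Trivalent) {A : Set V} (hA : G.Acyclic A) {v : V}
    (hv : v ∈ A) :
    ((G.bin (A \ {v})ᶜ) \ (G.bin Aᶜ)).ncard + (G.bin A ∩ {e | v ∈ G.ends e}).ncard ≤ 3 := by
  have hnl : ∀ e : E, G.ends e ≠ s(v, v) := fun e => G.not_loop_of_acyclic hA hv e
  have hdall := G.card_edges_at h3 hnl
  set F := (G.bin (A \ {v})ᶜ) \ (G.bin Aᶜ) with hF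
  set Dv := G.bin A ∩ {e | v ∈ G.ends e} with hDv
  have hFsub : F ⊆ {e : E | v ∈ G.ends e} := by
    rintro e ⟨heT, heS⟩
    by_contra hve
    apply heS
    obtain ⟨x, y, hxy⟩ := GC.sym2_exists_eq (G.ends e)
    have hx := G.ends_mem_of_mem_bin heT x (by rw [hxy]; exact Sym2.mem_mk_left _ _)
    have hy := G.ends_mem_of_mem_bin heT y (by rw [hxy]; exact Sym2.mem_mk_right _ _)
    have hxv : x ≠ v := fun h => hve (show v ∈ G.ends e by
      rw [hxy, ← h]; exact Sym2.mem_mk_left _ _)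
    have hyv : y ≠ v := fun h => hve (show v ∈ G.ends e by
      rw [hxy, ← h]; exact Sym2.mem_mk_right _ _)
    have hx' : x ∈ Aᶜ := by
      simp only [Set.mem_compl_iff, Set.mem_diff, Set.mem_singleton_iff, not_and, not_not] at hx ⊢
      intro hxa
      exact hxv (hx hxa)
    have hy' : y ∈ Aᶜ := by
      simp only [Set.mem_compl_iff, Set.mem_diff, Set.mem_singleton_iff, not_and, not_not] at hy ⊢
      intro hya
      exact hyv (hy hya)
    exact ⟨x, hx', y, hy', hxy⟩
  have hdisj : Disjoint F Dv := Set.disjoint_left.2 (by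
    rintro e ⟨heT, -⟩ ⟨heA, hvmem⟩
    obtain ⟨y, hy⟩ := Sym2.mem_iff_exists.1 hvmem
    have hyv : y ≠ v := fun h => hnl e (by rw [hy, h])
    have hyA : y ∈ A := G.ends_mem_of_mem_bin heA y (by rw [hy]; exact Sym2.mem_mk_right _ _)
    have hyT := G.ends_mem_of_mem_bin heT y (by rw [hy]; exact Sym2.mem_mk_right _ _)
    simp only [Set.mem_compl_iff, Set.mem_diff, Set.mem_singleton_iff] at hyT
    exact hyT ⟨hyA, hyv⟩)
  calc F.ncard + Dv.ncard = (F ∪ Dv).ncard :=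
      (Set.ncard_union_eq hdisj F.toFinite Dv.toFinite).symm
    _ ≤ ({e : E | v ∈ G.ends e}).ncard :=
      Set.ncard_le_ncard (Set.union_subset hFsub (fun e he => he.2)) (Set.toFinite _)
    _ = 3 := hdall

end Multigraph

lemma GC.eqvGen_invariant {α : Type*} {r : α → α → Prop} {P : α → Prop}
    (hstep : ∀ a b, r a b → (P a ↔ P b)) {a b : α} (h : Relation.EqvGen r a b) :
    P a ↔ P b := by
  induction h with
  | rel x y hxy => exact hstep x y hxy
  | refl x => exact Iff.rfl
  | symm x y _ ih => exact ih.symm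
  | trans x y z _ _ ih1 ih2 => exact ih1.trans ih2

namespace Multigraph
open Relation

variable {V E : Type*} [Fintype V] [Fintype E] (G : Multigraph V E)

/-- In a trivalent 2-edge-connected graph, removing a single vertex leaves at most one
component. -/
lemma cut_lemma (h3 : G.Trivalent) (h2 : G.TwoEdgeConnected) {v : V}
    (hnl : ∀ e : E, G.ends e ≠ s(v, v)) :
    G.numComponentsSub ({v}ᶜ : Set V) ≤ 1 := by
  classical
  by_contra hcon
  push_neg at hcon
  set S : Set V := ({v}ᶜ : Set V) with hS
  rw [numComponentsSub_def] at hcon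
  haveI := Fintype.ofFinite (Quot (G.srel S))
  have hnt : Nontrivial (Quot (G.srel S)) := by
    rw [← Finite.one_lt_card_iff_nontrivial]
    omega
  obtain ⟨κ1, κ2, hκ12⟩ := hnt
  -- edges at v
  set D : Finset E := Finset.univ.filter (fun e => v ∈ G.ends e) with hD
  have hDcard : D.card = 3 := by
    have := G.card_edges_at h3 hnl
    rw [Set.ncard_eq_toFinset_card'] at this
    rw [← this]
    congr 1
    ext e
    simp [hD]
  have hoth : ∀ e ∈ D, ∃ y, y ∈ S ∧ G.ends e = s(v, y) := by
    intro e he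
    obtain ⟨y, hy⟩ := Sym2.mem_iff_exists.1 (Finset.mem_filter.1 he).2
    have hyv : y ≠ v := by rintro rfl; exact hnl e hy
    exact ⟨y, hyv, hy⟩
  choose oth hothS hothend using hoth
  -- key step: if at most one edge at v leads into class κ, contradiction with 2-edge-conn.
  have key : ∀ (κ : Quot (G.srel S)) (e0 : E),
      (∀ e (he : e ∈ D), Quot.mk (G.srel S) ⟨oth e he, hothS e he⟩ = κ → e = e0) → False := by
    intro κ e0 hu
    obtain ⟨y0, hy0⟩ := κ.exists_rep
    have hP0 : ∃ h : y0.1 ∈ S, Quot.mk (G.srel S) ⟨y0.1, h⟩ = κ := ⟨y0.2, by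
      rw [← hy0]⟩
    set P : V → Prop := fun z => ∃ h : z ∈ S, Quot.mk (G.srel S) ⟨z, h⟩ = κ with hPdef
    have hPv : ¬ P v := by
      rintro ⟨hvS, -⟩
      exact hvS rfl
    have hstep : ∀ a b, G.erel ({e0}ᶜ : Set E) a b → (P a ↔ P b) := by
      rintro a b ⟨e, he0, hend⟩
      by_cases hvmem : v ∈ G.ends e
      · have heD : e ∈ D := by simp [hD, hvmem]
        have hPo : ¬ P (oth e heD) := by
          rintro ⟨hoS, hoκ⟩
          exact he0 (hu e heD (by rw [← hoκ]))
        have := hothend e heD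
        rw [hend] at this
        rcases Sym2.eq_iff.1 this.symm with ⟨rfl, rfl⟩ | ⟨rfl, rfl⟩
        · exact iff_of_false hPv hPo
        · exact iff_of_false hPo hPv
      · have haS : a ∈ S := by
          intro ha
          exact hvmem (by rw [hend, Set.mem_singleton_iff.1 ha]; exact Sym2.mem_mk_left _ _)
        have hbS : b ∈ S := by
          intro hb
          exact hvmem (by rw [hend, Set.mem_singleton_iff.1 hb]; exact Sym2.mem_mk_right _ _)
        have hmk : Quot.mk (G.srel S) ⟨a, haS⟩ = Quot.mk (G.srel S) ⟨b, hbS⟩ :=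
          Quot.sound ⟨e, hend⟩
        constructor
        · rintro ⟨ha', hκa⟩
          exact ⟨hbS, by rw [← hmk]; exact hκa⟩
        · rintro ⟨hb', hκb⟩
          exact ⟨haS, by rw [hmk]; exact hκb⟩
    have hc1 : Nat.card (Quot (G.erel ({e0}ᶜ : Set E))) = 1 := h2.2 e0
    have hsub : Subsingleton (Quot (G.erel ({e0}ᶜ : Set E))) :=
      (Nat.card_eq_one_iff_unique.1 hc1).1
    have hconn : EqvGen (G.erel ({e0}ᶜ : Set E)) y0.1 v :=
      Quot.eq.1 (Subsingleton.elim _ _)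
    exact hPv ((GC.eqvGen_invariant hstep hconn).1 hP0)
  -- pigeonhole: some class among κ1 κ2 receives at most one edge of D
  set m : {e // e ∈ D} → Quot (G.srel S) :=
    fun e => Quot.mk (G.srel S) ⟨oth e.1 e.2, hothS e.1 e.2⟩ with hm
  have hcard_attach : D.attach.card = 3 := by rw [Finset.card_attach, hDcard]
  have hfib : (D.attach.filter (fun e => m e = κ1)).card ≤ 1 ∨
      (D.attach.filter (fun e => m e = κ2)).card ≤ 1 := by
    by_contra hc
    push_neg at hc
    have hdisj : Disjoint (D.attach.filter (fun e => m e = κ1))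
        (D.attach.filter (fun e => m e = κ2)) := by
      refine Finset.disjoint_left.2 (fun e he1 he2 => ?_)
      exact hκ12 ((Finset.mem_filter.1 he1).2.symm.trans (Finset.mem_filter.1 he2).2)
    have hun : ((D.attach.filter (fun e => m e = κ1)) ∪
        (D.attach.filter (fun e => m e = κ2))).card ≤ 3 := by
      refine le_trans (Finset.card_le_card (fun e he => ?_)) hcard_attach.le
      rcases Finset.mem_union.1 he with h | h
      · exact (Finset.mem_filter.1 h).1
      · exact (Finset.mem_filter.1 h).1
    rw [Finset.card_union_of_disjoint hdisj] at hun
    omega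
  have hfib' : ∃ κ, (D.attach.filter (fun e => m e = κ)).card ≤ 1 := by
    rcases hfib with h | h
    · exact ⟨κ1, h⟩
    · exact ⟨κ2, h⟩
  obtain ⟨κ, hκ⟩ := hfib'
  by_cases hne : (D.attach.filter (fun e => m e = κ)).Nonempty
  · obtain ⟨e1, he1⟩ := hne
    refine key κ e1.1 (fun e he hm' => ?_)
    have hmem : (⟨e, he⟩ : {e // e ∈ D}) ∈ D.attach.filter (fun e => m e = κ) := by
      refine Finset.mem_filter.2 ⟨Finset.mem_attach _ _, hm'⟩
    have := Finset.card_le_one.1 hκ _ hmem _ he1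
    exact congrArg Subtype.val this
  · have hDne : D.Nonempty := Finset.card_pos.1 (by omega)
    obtain ⟨e1, he1⟩ := hDne
    refine key κ e1 (fun e he hm' => ?_)
    exact absurd ⟨⟨e, he⟩, Finset.mem_filter.2 ⟨Finset.mem_attach _ _, hm'⟩⟩ hne

end Multigraph

namespace Multigraph
open Relation

variable {V E : Type*} [Fintype V] [Fintype E] (G : Multigraph V E)

lemma circuit_comp (h3 : G.Trivalent) (h2 : G.TwoEdgeConnected) {A : Set V}
    (hA : G.Acyclic A) (hcirc : G.IsCircuitMG A) :
    G.numComponentsSub A + 1 = G.numComponentsSub Aᶜ := by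
  obtain ⟨hne, hrank, hmin⟩ := hcirc
  have hlt := (G.bondRank_le_iff h3 h2 hA hne).1 hrank
  by_contra hc
  have hge : G.numComponentsSub A + 2 ≤ G.numComponentsSub Aᶜ := by omega
  by_cases hone : A.ncard = 1
  · obtain ⟨v, rfl⟩ := Set.ncard_eq_one.1 hone
    have hnl : ∀ e : E, G.ends e ≠ s(v, v) := fun e =>
      G.not_loop_of_acyclic hA rfl e
    have hcut := G.cut_lemma h3 h2 hnl
    have hw := G.numComponentsSub_pos (Set.singleton_nonempty v)
    omega
  · have ha1 : 0 < A.ncard := (Set.ncard_pos A.toFinite).2 hne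
    obtain ⟨v, hv, hdv⟩ := G.exists_low_vertex hA hne
    have hb := G.comp_sub_remove hv
    have hc' := G.comp_compl_add hv
    have hd := G.boundary_bound h3 hA hv
    have hA'card : (A \ {v}).ncard = A.ncard - 1 := Set.ncard_diff_singleton_of_mem hv
    have hA'ne : (A \ {v}).Nonempty := by
      rw [← Set.ncard_pos (A \ {v}).toFinite]
      omega
    have hss : A \ {v} ⊂ A := by
      rw [Set.ssubset_iff_subset_ne]
      refine ⟨Set.diff_subset, fun h => ?_⟩
      rw [← h] at hv
      exact hv.2 rfl
    have hmin' := hmin (A \ {v}) hss hA'ne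
    have hiff := G.bondRank_le_iff h3 h2 (G.acyclic_subset Set.diff_subset hA) hA'ne
    have hwlt : G.numComponentsSub (A \ {v}) < G.numComponentsSub (A \ {v})ᶜ := by omega
    exact absurd (hiff.2 hwlt) (by omega)

end Multigraph


/-- For a trivalent 2-edge-connected finite graph `G` and an
acyclic `A ⊆ V`: `A` is dependent in `M_G` iff it contains a nonempty subset
`A'` with `ω(A') < ω(V-A')`; moreover if `A` is a circuit of `M_G` then
`ω(A) + 1 = ω(V-A)`. -/
theorem acyclic_depMG_iff_and_circuit_components {V E : Type*} [Fintype V] [Fintype E]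
    (G : Multigraph V E) (h3 : G.Trivalent) (h2 : G.TwoEdgeConnected)
    (A : Set V) (hA : G.Acyclic A) :
    (G.DepMG A ↔ ∃ A' ⊆ A, A'.Nonempty ∧
        G.numComponentsSub A' < G.numComponentsSub A'ᶜ) ∧
    (G.IsCircuitMG A → G.numComponentsSub A + 1 = G.numComponentsSub Aᶜ) := by
  exact ⟨G.depMG_iff h3 h2 hA, fun hcirc => G.circuit_comp h3 h2 hA hcirc⟩
end
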